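/- Let m, n ≥ 3. If L' and L are right ideals (over possibly different alphabets) with quotient complexities m and n respectively, then κ(L'·L) ≤ m + 2^(n-2) + 2^(n-1) + 1. Moreover, for all m, n ≥ 3 there exist right ideals L' and L, with four-letter alphabets Σ_{L'} and Σ_L satisfying Σ_{L'} \ Σ_L ≠ ∅ and Σ_L \ Σ_{L'} ≠ ∅, of complexities m and n, such that κ(L'·L) = m + 2^(n-2) + 2^(n-1) + 1. -/

import Mathlib

/-- The alphabet of a language: letters occurring in some word of `L`. -/
def alphabetOf {α : Type*} (L : Language α) : Set α :=
  {a | ∃ u v : List α, u ++ [a] ++ v ∈ L}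

/-- The left quotient of `L` by a word `w`. -/
def leftQuotient {α : Type*} (L : Language α) (w : List α) : Language α :=
  {x | w ++ x ∈ L}

/-- The set of left quotients of `L` by words over the alphabet of `L`. -/
def quotientSet {α : Type*} (L : Language α) : Set (Language α) :=
  {K | ∃ w : List α, (∀ a ∈ w, a ∈ alphabetOf L) ∧ K = leftQuotient L w}

/-- `L` is regular with quotient complexity `m`: the set of its left quotients
(by words over its own alphabet) is finite of cardinality exactly `m`. -/
def HasComplexity {α : Type*} (L : Language α) (m : ℕ) : Prop :=
  (quotientSet L).Finite ∧ (quotientSet L).ncard = m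

/-- All words whose letters lie in `S`. -/
def starOf {α : Type*} (S : Set α) : Language α :=
  {w | ∀ a ∈ w, a ∈ S}

/-- A nonempty language `L` is a right ideal if `L · Σ_L^* = L`. -/
def IsRightIdeal {α : Type*} (L : Language α) : Prop :=
  (∃ w, w ∈ L) ∧ L * starOf (alphabetOf L) = L

/-- A nonempty language `L` is a left ideal if `Σ_L^* · L = L`. -/
def IsLeftIdeal {α : Type*} (L : Language α) : Prop :=
  (∃ w, w ∈ L) ∧ starOf (alphabetOf L) * L = L

/-- A nonempty language `L` is a two-sided ideal if `Σ_L^* · L · Σ_L^* = L`. -/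
def IsTwoSidedIdeal {α : Type*} (L : Language α) : Prop :=
  (∃ w, w ∈ L) ∧ starOf (alphabetOf L) * L * starOf (alphabetOf L) = L

namespace RIP
open Set

/-- View a language as a set of words. -/
def toS {α : Type*} (L : Language α) : Set (List α) := L

@[simp] lemma mem_toS {α : Type*} {L : Language α} {x : List α} : x ∈ toS L ↔ x ∈ L := Iff.rfl

lemma toS_inj {α : Type*} {L M : Language α} (h : toS L = toS M) : L = M := h

variable {α : Type*} {L L' : Language α} {w x : List α} {a : α}

lemma mem_alphabet_of_mem (hw : w ∈ L) (ha : a ∈ w) : a ∈ alphabetOf L := by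
  obtain ⟨s, t, rfl⟩ := List.append_of_mem ha
  exact ⟨s, t, by simpa using hw⟩

lemma mem_alphabet_of_quot (hx : x ∈ leftQuotient L w) (ha : a ∈ x) : a ∈ alphabetOf L := by
  have : a ∈ w ++ x := by simp [ha]
  exact mem_alphabet_of_mem hx this

lemma leftQuotient_subset_star : toS (leftQuotient L w) ⊆ toS (starOf (alphabetOf L)) :=
  fun _ hx _ ha => mem_alphabet_of_quot hx ha

lemma leftQuotient_eq_empty (ha : a ∈ w) (h : a ∉ alphabetOf L) : toS (leftQuotient L w) = ∅ := by
  ext x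
  simp only [Set.mem_empty_iff_false, iff_false, mem_toS]
  intro hx
  exact h (mem_alphabet_of_mem hx (by simp [ha]))

lemma nil_mem_starOf {S : Set α} : ([] : List α) ∈ starOf S := by
  intro a ha; simp at ha

lemma append_mem_of_rightIdeal (hL : IsRightIdeal L) (hw : w ∈ L)
    (hx : x ∈ starOf (alphabetOf L)) : w ++ x ∈ L := by
  suffices h : w ++ x ∈ L * starOf (alphabetOf L) by rw [hL.2] at h; exact h
  exact ⟨w, hw, x, hx, rfl⟩

lemma leftQuotient_eq_star (hL : IsRightIdeal L) (hw : w ∈ L) :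
    leftQuotient L w = starOf (alphabetOf L) := by
  apply toS_inj
  apply subset_antisymm leftQuotient_subset_star
  intro x hx
  exact append_mem_of_rightIdeal hL hw hx

lemma leftQuotient_nil : leftQuotient L [] = L := by
  apply toS_inj; ext x; simp [leftQuotient, toS]; exact Iff.rfl

lemma mem_quotientSet_self : L ∈ quotientSet L :=
  ⟨[], by simp, leftQuotient_nil.symm⟩

lemma star_mem_quotientSet (hL : IsRightIdeal L) :
    starOf (alphabetOf L) ∈ quotientSet L := by
  obtain ⟨w, hw⟩ := hL.1
  exact ⟨w, fun a ha => mem_alphabet_of_mem hw ha, (leftQuotient_eq_star hL hw).symm⟩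

lemma ne_star_of_two_le (hL : IsRightIdeal L) {n : ℕ} (h : HasComplexity L n) (hn : 2 ≤ n) :
    L ≠ starOf (alphabetOf L) := by
  intro hEq
  have hQ : quotientSet L = {L} := by
    apply subset_antisymm
    · rintro K ⟨w, hw, rfl⟩
      have hwL : w ∈ L := by rw [hEq]; exact hw
      simp only [Set.mem_singleton_iff]
      rw [leftQuotient_eq_star hL hwL, ← hEq]
    · rintro K hK
      simp only [Set.mem_singleton_iff] at hK
      subst hK
      exact mem_quotientSet_self
  have h2 := h.2
  rw [hQ, Set.ncard_singleton] at h2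
  omega

lemma leftQuotient_mul (L' L : Language α) (w : List α) :
    toS (leftQuotient (L' * L) w) =
      toS ((leftQuotient L' w) * L) ∪
        ⋃ j ∈ {j | j ≤ w.length ∧ w.take j ∈ L'}, toS (leftQuotient L (w.drop j)) := by
  ext x
  constructor
  · intro h
    obtain ⟨u, hu, v, hv, huv⟩ := Language.mem_mul.mp h
    rcases List.append_eq_append_iff.mp huv with ⟨u', hw, hvideo⟩ | ⟨w', hu', hx⟩
    · subst hw
      refine Or.inr ?_
      refine Set.mem_iUnion₂.mpr ⟨u.length, ⟨by simp, by simpa [List.take_left] using hu⟩, ?_⟩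
      have hdrop : (u ++ u').drop u.length = u' := by simp
      rw [mem_toS, hdrop]
      exact (hvideo ▸ hv : u' ++ x ∈ L)
    · subst hu'
      have hw' : w' ∈ leftQuotient L' w := hu
      exact Or.inl (Language.mem_mul.mpr ⟨w', hw', v, hv, hx.symm⟩)
  · rintro (h | h)
    · obtain ⟨p, hp, q, hq, hpq⟩ := Language.mem_mul.mp h
      have hwp : w ++ p ∈ L' := hp
      exact Language.mem_mul.mpr ⟨w ++ p, hwp, q, hq, by rw [← hpq, List.append_assoc]⟩
    · obtain ⟨j, hj, hx⟩ := Set.mem_iUnion₂.mp h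
      have hdx : w.drop j ++ x ∈ L := hx
      exact Language.mem_mul.mpr ⟨w.take j, hj.2, w.drop j ++ x, hdx, by
        rw [← List.append_assoc, List.take_append_drop]⟩

lemma ncard_subsets {β : Type*} {s : Set β} (hs : s.Finite) :
    {t | t ⊆ s}.ncard = 2 ^ s.ncard := by
  induction s, hs using Set.Finite.induction_on with
  | empty => simp [Set.subset_empty_iff]
  | @insert a s ha hs ih =>
    have h1 : {t | t ⊆ insert a s} = {t | t ⊆ s} ∪ (insert a) '' {t | t ⊆ s} := by
      ext t
      simp only [Set.mem_setOf_eq, Set.mem_union, Set.mem_image]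
      constructor
      · intro h
        by_cases hat : a ∈ t
        · refine Or.inr ⟨t \ {a}, fun x hx => ?_, by
            rw [Set.insert_diff_singleton, Set.insert_eq_of_mem hat]⟩
          rcases h hx.1 with h' | h'
          · exact absurd h' hx.2
          · exact h'
        · refine Or.inl (fun x hx => ?_)
          rcases h hx with rfl | h'
          · exact absurd hx hat
          · exact h'
      · rintro (h | ⟨t', ht', rfl⟩)
        · exact h.trans (Set.subset_insert _ _)
        · exact Set.insert_subset_insert ht'
    have hfin : {t | t ⊆ s}.Finite := hs.finite_subsets
    have hdisj : Disjoint {t | t ⊆ s} ((insert a) '' {t | t ⊆ s}) := by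
      rw [Set.disjoint_left]
      rintro t ht ⟨t', ht', rfl⟩
      exact ha (ht (Set.mem_insert a t'))
    have hinj : Set.InjOn (insert a) {t | t ⊆ s} := by
      intro t₁ h₁ t₂ h₂ h
      have e₁ : t₁ = insert a t₁ \ {a} :=
        (Set.insert_diff_self_of_notMem (fun h => ha (h₁ h))).symm
      have e₂ : t₂ = insert a t₂ \ {a} :=
        (Set.insert_diff_self_of_notMem (fun h => ha (h₂ h))).symm
      rw [e₁, e₂, h]
    rw [h1, Set.ncard_union_eq hdisj hfin (hfin.image _),
      Set.ncard_image_of_injOn hinj, ih, Set.ncard_insert_of_notMem ha hs]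
    ring


/-- View a set of words as a language. -/
def ofS {α : Type*} (s : Set (List α)) : Language α := s

@[simp] lemma mem_ofS {α : Type*} {s : Set (List α)} {x : List α} : x ∈ ofS s ↔ x ∈ s := Iff.rfl

/-- Union of a set of languages, as a language. -/
def sU {α : Type*} (T : Set (Language α)) : Language α := ofS (⋃₀ (toS '' T))

lemma mem_sU {α : Type*} {T : Set (Language α)} {x : List α} :
    x ∈ sU T ↔ ∃ K ∈ T, x ∈ K := by
  constructor
  · rintro ⟨s, ⟨K, hK, rfl⟩, hx⟩
    exact ⟨K, hK, hx⟩
  · rintro ⟨K, hK, hx⟩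
    exact ⟨toS K, ⟨K, hK, rfl⟩, hx⟩

/-- Union of two languages. -/
def unL {α : Type*} (A B : Language α) : Language α := ofS (toS A ∪ toS B)

lemma mem_unL {α : Type*} {A B : Language α} {x : List α} :
    x ∈ unL A B ↔ x ∈ A ∨ x ∈ B := Iff.rfl

variable {α : Type*} {L L' : Language α} {w x : List α} {a : α}

theorem upper_bound (L' L : Language α) (hI' : IsRightIdeal L') (hI : IsRightIdeal L)
    {m n : ℕ} (hm : 3 ≤ m) (hn : 3 ≤ n) (hC' : HasComplexity L' m) (hC : HasComplexity L n) :
    (quotientSet (L' * L)).Finite ∧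
      (quotientSet (L' * L)).ncard ≤ m + 2 ^ (n - 2) + 2 ^ (n - 1) + 1 := by
  set F' : Language α := starOf (alphabetOf L') with hF'def
  set F : Language α := starOf (alphabetOf L) with hFdef
  set Q' : Set (Language α) := quotientSet L' with hQ'def
  set Q : Set (Language α) := quotientSet L with hQdef
  set piece1 : Set (Language α) := (fun q => q * L) '' (Q' \ {F'}) with hp1
  set piece2 : Set (Language α) := (fun T => unL (F' * L) (sU T)) '' {T | T ⊆ Q \ {L, F}} with hp2
  set piece3 : Set (Language α) := {unL (F' * L) F} with hp3
  set piece4 : Set (Language α) := sU '' {T | T ⊆ Q \ {F}} with hp4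
  set piece5 : Set (Language α) := {F} with hp5
  set K5 : Set (Language α) := piece1 ∪ piece2 ∪ piece3 ∪ piece4 ∪ piece5 with hK5
  -- the main inclusion
  have main : quotientSet (L' * L) ⊆ K5 := by
    rintro K ⟨w, -, rfl⟩
    set J : Set ℕ := {j | j ≤ w.length ∧ w.take j ∈ L'} with hJdef
    set S : Set (Language α) := (fun j => leftQuotient L (w.drop j)) '' J with hSdef
    have hform : toS (leftQuotient (L' * L) w) = toS ((leftQuotient L' w) * L) ∪ toS (sU S) := by
      rw [leftQuotient_mul]
      congr 1
      ext x
      simp only [Set.mem_iUnion, mem_toS, mem_sU, hSdef, Set.mem_image]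
      constructor
      · rintro ⟨j, hj, hx⟩
        exact ⟨_, ⟨j, hj, rfl⟩, hx⟩
      · rintro ⟨K, ⟨j, hj, rfl⟩, hx⟩
        exact ⟨j, hj, hx⟩
    have hSQ : ∀ K ∈ S, toS K = ∅ ∨ K ∈ Q := by
      rintro K ⟨j, hj, rfl⟩
      by_cases h : ∀ a ∈ w.drop j, a ∈ alphabetOf L
      · exact Or.inr ⟨w.drop j, h, rfl⟩
      · push_neg at h
        obtain ⟨a, ha, hna⟩ := h
        exact Or.inl (leftQuotient_eq_empty ha hna)
    have hSF : ∀ K ∈ S, toS K ⊆ toS F := by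
      rintro K ⟨j, hj, rfl⟩
      exact leftQuotient_subset_star
    by_cases hJ : J = ∅
    · -- no prefix of w is in L'
      have hempty : toS (sU S) = ∅ := by
        ext x
        simp only [mem_toS, mem_sU, Set.mem_empty_iff_false, iff_false]
        rintro ⟨K, hK, -⟩
        rw [hSdef, hJ] at hK
        simpa using hK
      by_cases hAl : ∀ a ∈ w, a ∈ alphabetOf L'
      · -- quotient is q' * L with q' a non-final quotient of L'
        have hq'Q : leftQuotient L' w ∈ Q' := ⟨w, hAl, rfl⟩
        have hq'ne : leftQuotient L' w ≠ F' := by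
          intro hEq
          have hwL' : w ∈ L' := by
            have h0 : ([] : List α) ∈ leftQuotient L' w := by
              rw [hEq]; exact nil_mem_starOf
            have h1 : w ++ [] ∈ L' := h0
            simpa using h1
          have : w.length ∈ J := ⟨le_refl _, by simpa [List.take_length] using hwL'⟩
          rw [hJ] at this; simpa using this
        have hKeq : leftQuotient (L' * L) w = (leftQuotient L' w) * L := by
          apply toS_inj
          rw [hform, hempty, Set.union_empty]
        rw [hKeq]
        exact Or.inl (Or.inl (Or.inl (Or.inl ⟨_, ⟨hq'Q, hq'ne⟩, rfl⟩)))
      · -- a letter of w is outside Σ'; quotient is ∅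
        push_neg at hAl
        obtain ⟨a, ha, hna⟩ := hAl
        have hq'e : toS (leftQuotient L' w) = ∅ := leftQuotient_eq_empty ha hna
        have hmule : toS ((leftQuotient L' w) * L) = ∅ := by
          ext x
          simp only [mem_toS, Set.mem_empty_iff_false, iff_false]
          intro hx
          obtain ⟨p, hp, q, hq, hpq⟩ := Language.mem_mul.mp hx
          have : p ∈ toS (leftQuotient L' w) := hp
          rw [hq'e] at this; exact this
        have hKeq : leftQuotient (L' * L) w = sU ∅ := by
          apply toS_inj
          rw [hform, hmule, hempty, Set.union_empty]
          ext x
          simp [mem_sU]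
        rw [hKeq]
        exact Or.inl (Or.inr ⟨∅, by simp, rfl⟩)
    · -- some prefix of w is in L'
      obtain ⟨j₀, hj₀⟩ := Set.nonempty_iff_ne_empty.mpr hJ
      by_cases hAl : ∀ a ∈ w, a ∈ alphabetOf L'
      · -- w is over Σ', hence w ∈ L' and the L'-quotient is F'
        have hwL' : w ∈ L' := by
          have hdropAl : w.drop j₀ ∈ starOf (alphabetOf L') := by
            intro a ha
            exact hAl a (List.drop_subset j₀ w ha)
          have := append_mem_of_rightIdeal hI' hj₀.2 hdropAl
          rwa [List.take_append_drop] at this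
        have hq'F : leftQuotient L' w = F' := leftQuotient_eq_star hI' hwL'
        have hLS : L ∈ S := by
          refine ⟨w.length, ⟨le_refl _, by simpa [List.take_length] using hwL'⟩, ?_⟩
          show leftQuotient L (List.drop w.length w) = L
          rw [List.drop_length, leftQuotient_nil]
        by_cases hFS : F ∈ S
        · -- the quotient collapses to F'·L ∪ F
          have hKeq : leftQuotient (L' * L) w = unL (F' * L) F := by
            apply toS_inj
            rw [hform, hq'F]
            apply subset_antisymm
            · rintro x (hx | hx)
              · exact Or.inl hx
              · obtain ⟨K, hK, hxK⟩ := mem_sU.mp hx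
                exact Or.inr (hSF K hK hxK)
            · rintro x (hx | hx)
              · exact Or.inl hx
              · exact Or.inr (mem_sU.mpr ⟨F, hFS, hx⟩)
          rw [hKeq]
          exact Or.inl (Or.inl (Or.inr rfl))
        · -- the quotient is F'·L ∪ ⋃ T with T ⊆ Q \ {L, F}
          set T : Set (Language α) := {K | K ∈ S ∧ K ∈ Q ∧ K ≠ L} with hTdef
          have hTsub : T ⊆ Q \ {L, F} := by
            rintro K ⟨hKS, hKQ, hKL⟩
            refine ⟨hKQ, ?_⟩
            simp only [Set.mem_insert_iff, Set.mem_singleton_iff, not_or]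
            exact ⟨hKL, fun h => hFS (h ▸ hKS)⟩
          have hKeq : leftQuotient (L' * L) w = unL (F' * L) (sU T) := by
            apply toS_inj
            rw [hform, hq'F]
            apply subset_antisymm
            · rintro x (hx | hx)
              · exact Or.inl hx
              · obtain ⟨K, hK, hxK⟩ := mem_sU.mp hx
                by_cases hKL : K = L
                · subst hKL
                  refine Or.inl (Language.mem_mul.mpr ⟨[], nil_mem_starOf, x, hxK, rfl⟩)
                · rcases hSQ K hK with he | hQm
                  · exact absurd (show x ∈ toS K from hxK) (by rw [he]; simp)
                  · exact Or.inr (mem_sU.mpr ⟨K, ⟨hK, hQm, hKL⟩, hxK⟩)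
            · rintro x (hx | hx)
              · exact Or.inl hx
              · obtain ⟨K, hK, hxK⟩ := mem_sU.mp hx
                exact Or.inr (mem_sU.mpr ⟨K, hK.1, hxK⟩)
          rw [hKeq]
          exact Or.inl (Or.inl (Or.inl (Or.inr ⟨T, hTsub, rfl⟩)))
      · -- a letter of w is outside Σ'
        push_neg at hAl
        obtain ⟨a, ha, hna⟩ := hAl
        have hq'e : toS (leftQuotient L' w) = ∅ := leftQuotient_eq_empty ha hna
        have hmule : toS ((leftQuotient L' w) * L) = ∅ := by
          ext x
          simp only [mem_toS, Set.mem_empty_iff_false, iff_false]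
          intro hx
          obtain ⟨p, hp, q, hq, hpq⟩ := Language.mem_mul.mp hx
          have : p ∈ toS (leftQuotient L' w) := hp
          rw [hq'e] at this; exact this
        by_cases hFS : F ∈ S
        · have hKeq : leftQuotient (L' * L) w = F := by
            apply toS_inj
            rw [hform, hmule, Set.empty_union]
            apply subset_antisymm
            · intro x hx
              obtain ⟨K, hK, hxK⟩ := mem_sU.mp hx
              exact hSF K hK hxK
            · intro x hx
              exact mem_sU.mpr ⟨F, hFS, hx⟩
          rw [hKeq]
          exact Or.inr rfl
        · set T : Set (Language α) := {K | K ∈ S ∧ K ∈ Q} with hTdef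
          have hTsub : T ⊆ Q \ {F} := by
            rintro K ⟨hKS, hKQ⟩
            exact ⟨hKQ, fun h => hFS ((Set.mem_singleton_iff.mp h) ▸ hKS)⟩
          have hKeq : leftQuotient (L' * L) w = sU T := by
            apply toS_inj
            rw [hform, hmule, Set.empty_union]
            apply subset_antisymm
            · intro x hx
              obtain ⟨K, hK, hxK⟩ := mem_sU.mp hx
              rcases hSQ K hK with he | hQm
              · exact absurd (show x ∈ toS K from hxK) (by rw [he]; simp)
              · exact mem_sU.mpr ⟨K, ⟨hK, hQm⟩, hxK⟩
            · intro x hx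
              obtain ⟨K, hK, hxK⟩ := mem_sU.mp hx
              exact mem_sU.mpr ⟨K, hK.1, hxK⟩
          rw [hKeq]
          exact Or.inl (Or.inr ⟨T, hTsub, rfl⟩)
  -- counting
  have hQ'fin : Q'.Finite := hC'.1
  have hQfin : Q.Finite := hC.1
  have hFQ' : F' ∈ Q' := star_mem_quotientSet hI'
  have hFQ : F ∈ Q := star_mem_quotientSet hI
  have hLQ : L ∈ Q := mem_quotientSet_self
  have hLF : L ≠ F := ne_star_of_two_le hI hC (by omega)
  have hd1 : (Q' \ {F'}).ncard = m - 1 := by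
    rw [Set.ncard_diff_singleton_of_mem hFQ', hC'.2]
  have hsplit : Q \ {L, F} = (Q \ {L}) \ {F} := by
    ext K
    simp only [Set.mem_diff, Set.mem_insert_iff, Set.mem_singleton_iff]
    tauto
  have hFQL : F ∈ Q \ {L} := Set.mem_diff _ |>.mpr ⟨hFQ, by simpa using Ne.symm hLF⟩
  have hd2 : (Q \ {L, F}).ncard = n - 2 := by
    rw [hsplit, Set.ncard_diff_singleton_of_mem hFQL,
      Set.ncard_diff_singleton_of_mem hLQ, hC.2]
    omega
  have hd4 : (Q \ {F}).ncard = n - 1 := by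
    rw [Set.ncard_diff_singleton_of_mem hFQ, hC.2]
  have hfin1 : piece1.Finite := ((hQ'fin.diff).image _)
  have hfin2 : piece2.Finite := ((hQfin.diff).finite_subsets.image _)
  have hfin3 : piece3.Finite := Set.finite_singleton _
  have hfin4 : piece4.Finite := ((hQfin.diff).finite_subsets.image _)
  have hfin5 : piece5.Finite := Set.finite_singleton _
  have hK5fin : K5.Finite := ((((hfin1.union hfin2).union hfin3).union hfin4).union hfin5)
  have hc1 : piece1.ncard ≤ m - 1 := by
    rw [← hd1]; exact Set.ncard_image_le (hQ'fin.diff)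
  have hc2 : piece2.ncard ≤ 2 ^ (n - 2) := by
    have h := Set.ncard_image_le (f := fun T => unL (F' * L) (sU T))
      (s := {T | T ⊆ Q \ {L, F}}) ((hQfin.diff (t := {L, F})).finite_subsets)
    rw [ncard_subsets (hQfin.diff (t := {L, F})), hd2] at h
    exact h
  have hc4 : piece4.ncard ≤ 2 ^ (n - 1) := by
    have h := Set.ncard_image_le (f := sU)
      (s := {T | T ⊆ Q \ {F}}) ((hQfin.diff (t := {F})).finite_subsets)
    rw [ncard_subsets (hQfin.diff (t := {F})), hd4] at h
    exact h
  have hc3 : piece3.ncard ≤ 1 := le_of_eq (Set.ncard_singleton _)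
  have hc5 : piece5.ncard ≤ 1 := le_of_eq (Set.ncard_singleton _)
  have hcount : K5.ncard ≤ m + 2 ^ (n - 2) + 2 ^ (n - 1) + 1 := by
    calc K5.ncard ≤ piece1.ncard + piece2.ncard + piece3.ncard + piece4.ncard + piece5.ncard := by
          refine le_trans (Set.ncard_union_le _ _) ?_
          refine add_le_add (le_trans (Set.ncard_union_le _ _) ?_) le_rfl
          refine add_le_add (le_trans (Set.ncard_union_le _ _) ?_) le_rfl
          exact add_le_add (Set.ncard_union_le _ _) le_rfl
      _ ≤ (m - 1) + 2 ^ (n - 2) + 1 + 2 ^ (n - 1) + 1 := by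
          gcongr <;> omega
      _ ≤ m + 2 ^ (n - 2) + 2 ^ (n - 1) + 1 := by omega
  exact ⟨hK5fin.subset main, le_trans (Set.ncard_le_ncard main hK5fin) hcount⟩

/-! ### Part 2: the witness construction -/

/-- Alphabet of `L'`. -/
def SigA : Set (Fin 5) := {0, 1, 2, 3}

/-- Alphabet of `L`. -/
def SigB : Set (Fin 5) := {1, 2, 3, 4}

/-- The witness right ideal `L'`: words over `SigA` with at least `m-1` zeros. -/
def Lp (m : ℕ) : Language (Fin 5) := {w | (∀ a ∈ w, a ∈ SigA) ∧ m - 1 ≤ w.count 0}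

/-- Transition function of the witness DFA for `L`.  States `0, …, n-1` are live,
`n-1` is the accepting sink, anything `≥ n` is dead.  Letter `0` kills. -/
def dlt (n : ℕ) (a : Fin 5) (s : ℕ) : ℕ :=
  if a = 0 then n
  else if s = n - 1 then n - 1
  else if n ≤ s then n
  else if a = 1 then (s + 1) % (n - 1)
  else if a = 2 then (if s = 0 then 0 else (s + 1) % (n - 1))
  else if a = 3 then (if s = n - 2 then n - 1 else s)
  else s

/-- Run of the DFA from state `s`. -/
def runF (n : ℕ) (s : ℕ) (w : List (Fin 5)) : ℕ := w.foldl (fun t a => dlt n a t) s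

/-- Language of state `i`. -/
def KL (n i : ℕ) : Language (Fin 5) := {x | runF n i x = n - 1}

/-- The witness right ideal `L`. -/
def Ln (n : ℕ) : Language (Fin 5) := KL n 0

@[simp] lemma runF_nil {n s : ℕ} : runF n s [] = s := rfl

@[simp] lemma runF_cons {n s : ℕ} {a : Fin 5} {w : List (Fin 5)} :
    runF n s (a :: w) = runF n (dlt n a s) w := rfl

lemma runF_append {n s : ℕ} {u v : List (Fin 5)} :
    runF n s (u ++ v) = runF n (runF n s u) v := by simp [runF]

lemma mem_KL {n i : ℕ} {x : List (Fin 5)} : x ∈ KL n i ↔ runF n i x = n - 1 := Iff.rfl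

lemma leftQuotient_KL {n i : ℕ} (w : List (Fin 5)) :
    leftQuotient (KL n i) w = KL n (runF n i w) := by
  apply toS_inj
  ext x
  simp only [mem_toS]
  show w ++ x ∈ KL n i ↔ _
  rw [mem_KL, mem_KL, runF_append]

lemma dlt_dead {n : ℕ} {a : Fin 5} {s : ℕ} (hn : 1 ≤ n) (h : n ≤ s) : dlt n a s = n := by
  unfold dlt
  have h1 : s ≠ n - 1 := by omega
  simp [h1, h]

lemma runF_dead {n : ℕ} {w : List (Fin 5)} {s : ℕ} (hn : 1 ≤ n) (h : n ≤ s) :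
    n ≤ runF n s w := by
  induction w generalizing s with
  | nil => simpa using h
  | cons a w ih =>
    rw [runF_cons, dlt_dead hn h]
    exact ih le_rfl

lemma dlt_zero {n : ℕ} {s : ℕ} : dlt n 0 s = n := by unfold dlt; simp

lemma not_mem_KL_of_zero {n i : ℕ} (hn : 1 ≤ n) {x : List (Fin 5)}
    (hx : (0 : Fin 5) ∈ x) : x ∉ KL n i := by
  intro hmem
  obtain ⟨u, v, rfl⟩ := List.append_of_mem hx
  rw [mem_KL, runF_append, runF_cons, dlt_zero] at hmem
  have := runF_dead (n := n) (w := v) hn (le_refl n)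
  omega

lemma mem_KL_no_zero {n i : ℕ} (hn : 1 ≤ n) {x : List (Fin 5)} (hx : x ∈ KL n i) :
    ∀ a ∈ x, a ≠ 0 := by
  intro a ha h
  subst h
  exact not_mem_KL_of_zero hn ha hx

lemma dlt_live {n : ℕ} {a : Fin 5} {s : ℕ} (hs : s ≤ n - 1) :
    dlt n a s ≤ n - 1 ∨ dlt n a s = n := by
  unfold dlt
  split
  · exact Or.inr rfl
  · split
    · exact Or.inl (le_refl _)
    · split
      · exact Or.inr rfl
      · have hmod : (s + 1) % (n - 1) ≤ n - 1 := by
          rcases Nat.eq_or_lt_of_le (Nat.zero_le (n-1)) with h | h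
          · omega
          · exact le_of_lt (Nat.lt_of_lt_of_le (Nat.mod_lt _ (by omega)) (le_refl _))
        split
        · exact Or.inl hmod
        · split
          · split
            · exact Or.inl (by omega)
            · exact Or.inl hmod
          · split
            · split
              · exact Or.inl (le_refl _)
              · exact Or.inl hs
            · exact Or.inl hs

lemma dlt_sink {n : ℕ} {a : Fin 5} (ha : a ≠ 0) : dlt n a (n - 1) = n - 1 := by
  unfold dlt
  simp [ha]

lemma runF_sink {n : ℕ} {w : List (Fin 5)} (hw : ∀ a ∈ w, a ≠ 0) :
    runF n (n - 1) w = n - 1 := by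
  induction w with
  | nil => rfl
  | cons a w ih =>
    rw [runF_cons, dlt_sink (hw a (by simp))]
    exact ih (fun b hb => hw b (by simp [hb]))

lemma runF_replicate_one {n : ℕ} (hn : 3 ≤ n) {s : ℕ} (hs : s ≤ n - 2) (k : ℕ) :
    runF n s (List.replicate k 1) = (s + k) % (n - 1) := by
  induction k generalizing s with
  | zero => simpa using (Nat.mod_eq_of_lt (by omega)).symm
  | succ k ih =>
    rw [List.replicate_succ, runF_cons]
    have h1 : dlt n 1 s = (s + 1) % (n - 1) := by
      unfold dlt
      have : ¬ s = n - 1 := by omega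
      have : ¬ n ≤ s := by omega
      simp_all
    rw [h1, ih (by
      have := Nat.mod_lt (s + 1) (y := n - 1) (by omega)
      omega)]
    rw [Nat.mod_add_mod]
    congr 1
    omega

/-- The distinguishing word for state `i`. -/
def zseq (n i : ℕ) : List (Fin 5) := List.replicate (n - 2 - i) 1 ++ [3]

lemma dlt_three {n s : ℕ} (hn : 3 ≤ n) (hs : s ≤ n - 2) :
    dlt n 3 s = if s = n - 2 then n - 1 else s := by
  unfold dlt
  have h1 : ¬ s = n - 1 := by omega
  have h2 : ¬ n ≤ s := by omega
  rw [if_neg (by decide), if_neg h1, if_neg h2, if_neg (by decide), if_neg (by decide),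
    if_pos rfl]

lemma runF_zseq {n : ℕ} (hn : 3 ≤ n) {i j : ℕ} (hj : j ≤ n - 2) (hi : i ≤ n - 2) :
    runF n j (zseq n i) = if j = i then n - 1 else (j + (n - 2 - i)) % (n - 1) := by
  rw [zseq, runF_append, runF_replicate_one hn hj]
  set t := (j + (n - 2 - i)) % (n - 1) with ht
  have htlt : t < n - 1 := Nat.mod_lt _ (by omega)
  have h1 : runF n t [(3 : Fin 5)] = dlt n 3 t := rfl
  rw [h1, dlt_three hn (by omega)]
  have hsum : j + (n - 2 - i) < 2 * (n - 1) := by omega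
  by_cases hji : j = i
  · subst hji
    have : j + (n - 2 - j) = n - 2 := by omega
    rw [ht, this, Nat.mod_eq_of_lt (by omega)]
    simp
  · have hne : ¬ t = n - 2 := by
      intro hEq
      rcases Nat.lt_or_ge (j + (n - 2 - i)) (n - 1) with h | h
      · rw [Nat.mod_eq_of_lt h] at ht; omega
      · have : (j + (n - 2 - i)) % (n - 1) = j + (n - 2 - i) - (n - 1) := by
          rw [Nat.mod_eq_sub_mod h, Nat.mod_eq_of_lt (by omega)]
        omega
    simp [hne, hji]

lemma zseq_mem_KL {n : ℕ} (hn : 3 ≤ n) {i j : ℕ} (hj : j ≤ n - 1) (hi : i ≤ n - 2) :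
    zseq n i ∈ KL n j ↔ (j = i ∨ j = n - 1) := by
  by_cases hjtop : j = n - 1
  · subst hjtop
    simp only [mem_KL, or_true, iff_true]
    apply runF_sink
    intro a ha
    rw [zseq] at ha
    rcases List.mem_append.mp ha with h | h
    · rw [List.eq_of_mem_replicate h]; decide
    · simp at h; rw [h]; decide
  · have hj2 : j ≤ n - 2 := by omega
    rw [mem_KL, runF_zseq hn hj2 hi]
    by_cases hji : j = i
    · simp [hji]
    · have hmlt : (j + (n - 2 - i)) % (n - 1) < n - 1 := Nat.mod_lt _ (by omega)
      simp only [hji, if_false]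
      constructor
      · intro h
        omega
      · rintro (h | h)
        · exact h.elim
        · exact absurd h hjtop

lemma zseq_no_zero {n i : ℕ} : ∀ a ∈ zseq n i, a ≠ 0 := by
  intro a ha
  rw [zseq] at ha
  rcases List.mem_append.mp ha with h | h
  · rw [List.eq_of_mem_replicate h]; decide
  · simp at h; rw [h]; decide

lemma zseq_in_SigA {n i : ℕ} : ∀ a ∈ zseq n i, a ∈ SigA := by
  intro a ha
  rw [zseq] at ha
  rcases List.mem_append.mp ha with h | h
  · rw [List.eq_of_mem_replicate h]; simp [SigA]
  · simp at h; rw [h]; simp [SigA]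

/-- Quotients of `Lp`. -/
def q0 (r : ℕ) : Language (Fin 5) := {x | (∀ a ∈ x, a ∈ SigA) ∧ r ≤ x.count 0}

lemma mem_q0 {r : ℕ} {x : List (Fin 5)} :
    x ∈ q0 r ↔ (∀ a ∈ x, a ∈ SigA) ∧ r ≤ x.count 0 := Iff.rfl

lemma q0_zero : q0 0 = starOf SigA := by
  apply toS_inj; ext x; simp [q0, starOf, toS]

lemma mem_Lp {m : ℕ} {w : List (Fin 5)} :
    w ∈ Lp m ↔ (∀ a ∈ w, a ∈ SigA) ∧ m - 1 ≤ w.count 0 := Iff.rfl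

lemma zero_mem_SigA : (0 : Fin 5) ∈ SigA := by simp [SigA]

lemma alph_Lp {m : ℕ} (hm : 3 ≤ m) : alphabetOf (Lp m) = SigA := by
  ext a
  constructor
  · rintro ⟨u, v, huv⟩
    exact huv.1 a (by simp)
  · intro ha
    by_cases h0 : a = 0
    · subst h0
      refine ⟨[], List.replicate (m - 2) 0, ?_, ?_⟩
      · intro b hb
        simp only [List.nil_append, List.cons_append, List.mem_cons, List.mem_replicate] at hb
        rcases hb with hb | hb2
        · rw [hb]; exact zero_mem_SigA
        · rw [hb2.2]; exact zero_mem_SigA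
      · simp [List.count_append, List.count_replicate]
        omega
    · refine ⟨List.replicate (m - 1) 0, [], ?_, ?_⟩
      · intro b hb
        rcases List.mem_append.mp hb with h' | h'
        · rcases List.mem_append.mp h' with h'' | h''
          · rw [List.eq_of_mem_replicate h'']; exact zero_mem_SigA
          · simp at h''; rw [h'']; exact ha
        · simp at h'
      · simp [List.count_append, List.count_replicate, h0]
lemma lq_Lp {m : ℕ} {u : List (Fin 5)} (hu : ∀ a ∈ u, a ∈ SigA) :
    leftQuotient (Lp m) u = q0 (m - 1 - u.count 0) := by
  apply toS_inj
  ext x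
  simp only [mem_toS]
  show u ++ x ∈ Lp m ↔ x ∈ q0 (m - 1 - u.count 0)
  rw [mem_Lp, mem_q0, List.count_append]
  constructor
  · rintro ⟨h1, h2⟩
    exact ⟨fun a ha => h1 a (by simp [ha]), by omega⟩
  · rintro ⟨h1, h2⟩
    constructor
    · intro a ha
      rcases List.mem_append.mp ha with h | h
      · exact hu a h
      · exact h1 a h
    · omega

lemma q0_ne {r r' : ℕ} (h : r < r') : q0 r ≠ q0 r' := by
  intro hEq
  have h1 : List.replicate r (0 : Fin 5) ∈ q0 r := by
    refine ⟨fun a ha => ?_, by simp [List.count_replicate]⟩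
    rw [List.eq_of_mem_replicate ha]; exact zero_mem_SigA
  rw [hEq] at h1
  have h2 := h1.2
  rw [List.count_replicate] at h2
  simp at h2
  omega

lemma q0_injective : Function.Injective q0 := by
  intro r r' h
  by_contra hne
  rcases Nat.lt_or_ge r r' with hlt | hge
  · exact q0_ne hlt h
  · exact q0_ne (by omega) h.symm

lemma quotSet_Lp {m : ℕ} (hm : 3 ≤ m) : quotientSet (Lp m) = q0 '' {r | r ≤ m - 1} := by
  ext K
  constructor
  · rintro ⟨w, hw, rfl⟩
    rw [alph_Lp hm] at hw
    rw [lq_Lp hw]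
    exact ⟨m - 1 - w.count 0, by simp only [Set.mem_setOf_eq]; omega, rfl⟩
  · rintro ⟨r, hr, rfl⟩
    simp only [Set.mem_setOf_eq] at hr
    refine ⟨List.replicate (m - 1 - r) 0, ?_, ?_⟩
    · intro a ha
      rw [List.eq_of_mem_replicate ha, alph_Lp hm]
      exact zero_mem_SigA
    · have hcnt : (List.replicate (m - 1 - r) (0 : Fin 5)).count 0 = m - 1 - r := by
        simp [List.count_replicate]
      rw [lq_Lp (fun a ha => by rw [List.eq_of_mem_replicate ha]; exact zero_mem_SigA), hcnt]
      have heq : m - 1 - (m - 1 - r) = r := by omega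
      rw [heq]

lemma hasComplexity_Lp {m : ℕ} (hm : 3 ≤ m) : HasComplexity (Lp m) m := by
  rw [HasComplexity, quotSet_Lp hm]
  have hset : {r | r ≤ m - 1} = ↑(Finset.range m) := by
    ext r
    simp
    omega
  constructor
  · exact (Set.Finite.image _ (by rw [hset]; exact (Finset.range m).finite_toSet))
  · rw [Set.ncard_image_of_injective _ q0_injective, hset, Set.ncard_coe_finset,
      Finset.card_range]

lemma rightIdeal_Lp {m : ℕ} (hm : 3 ≤ m) : IsRightIdeal (Lp m) := by
  constructor
  · refine ⟨List.replicate (m - 1) 0, fun a ha => ?_, by simp [List.count_replicate]⟩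
    rw [List.eq_of_mem_replicate ha]; exact zero_mem_SigA
  · rw [alph_Lp hm]
    apply toS_inj
    ext w
    simp only [mem_toS]
    constructor
    · intro h
      obtain ⟨u, hu, v, hv, rfl⟩ := Language.mem_mul.mp h
      refine ⟨fun a ha => ?_, ?_⟩
      · rcases List.mem_append.mp ha with h' | h'
        · exact hu.1 a h'
        · exact hv a h'
      · rw [List.count_append]
        have := hu.2
        omega
    · intro h
      exact Language.mem_mul.mpr ⟨w, h, [], nil_mem_starOf, by simp⟩

lemma mem_SigB_ne_zero {a : Fin 5} (ha : a ∈ SigB) : a ≠ 0 := by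
  rw [SigB] at ha
  rcases ha with h | h | h | h <;> (rw [h]; decide)

lemma ne_zero_mem_SigB {a : Fin 5} (ha : a ≠ 0) : a ∈ SigB := by
  fin_cases a
  · exact absurd rfl ha
  all_goals simp [SigB]

lemma dlt_zero_state {n : ℕ} (hn : 3 ≤ n) {a : Fin 5} (ha : a ∈ SigB) :
    dlt n a 0 ≤ n - 2 := by
  have h0 : a ≠ 0 := mem_SigB_ne_zero ha
  have h1 : ¬ (0 : ℕ) = n - 1 := by omega
  have h2 : ¬ n ≤ 0 := by omega
  unfold dlt
  rw [if_neg h0, if_neg h1, if_neg h2]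
  have hmod : (0 + 1) % (n - 1) = 1 := Nat.mod_eq_of_lt (by omega)
  split
  · omega
  · split
    · simp
    · split
      · have : ¬ (0 : ℕ) = n - 2 := by omega
        simp [this]
      · omega

lemma runF_zseq_self {n : ℕ} (hn : 3 ≤ n) {i : ℕ} (hi : i ≤ n - 2) :
    runF n i (zseq n i) = n - 1 := by
  rw [runF_zseq hn hi hi]
  simp

lemma zseq_mem_Ln {n : ℕ} (hn : 3 ≤ n) : zseq n 0 ∈ Ln n := by
  rw [Ln, mem_KL]
  exact runF_zseq_self hn (by omega)

lemma alph_Ln {n : ℕ} (hn : 3 ≤ n) : alphabetOf (Ln n) = SigB := by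
  ext a
  constructor
  · rintro ⟨u, v, huv⟩
    refine ne_zero_mem_SigB ?_
    exact mem_KL_no_zero (by omega) huv a (by simp)
  · intro ha
    refine ⟨[], zseq n (dlt n a 0), ?_⟩
    rw [Ln, mem_KL]
    have : ([] : List (Fin 5)) ++ [a] ++ zseq n (dlt n a 0) = a :: zseq n (dlt n a 0) := by simp
    rw [this, runF_cons]
    exact runF_zseq_self hn (dlt_zero_state hn ha)

lemma rightIdeal_Ln {n : ℕ} (hn : 3 ≤ n) : IsRightIdeal (Ln n) := by
  constructor
  · exact ⟨zseq n 0, zseq_mem_Ln hn⟩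
  · rw [alph_Ln hn]
    apply toS_inj
    ext w
    simp only [mem_toS]
    constructor
    · intro h
      obtain ⟨u, hu, v, hv, rfl⟩ := Language.mem_mul.mp h
      rw [Ln, mem_KL, runF_append]
      rw [Ln, mem_KL] at hu
      rw [hu]
      exact runF_sink (fun a ha => mem_SigB_ne_zero (hv a ha))
    · intro h
      exact Language.mem_mul.mpr ⟨w, h, [], nil_mem_starOf, by simp⟩

lemma dlt_live' {n : ℕ} (hn : 3 ≤ n) {a : Fin 5} {s : ℕ} (hs : s ≤ n - 1) :
    dlt n a s ≤ n - 1 ∨ dlt n a s = n := by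
  exact dlt_live hs

lemma runF_le_of_no_zero {n : ℕ} (hn : 3 ≤ n) {s : ℕ} (hs : s ≤ n - 1)
    {w : List (Fin 5)} (hw : ∀ a ∈ w, a ≠ 0) : runF n s w ≤ n - 1 := by
  induction w generalizing s with
  | nil => simpa using hs
  | cons a w ih =>
    rw [runF_cons]
    have ha : a ≠ 0 := hw a (by simp)
    have hd : dlt n a s ≤ n - 1 := by
      unfold dlt
      rw [if_neg ha]
      split
      · omega
      · rw [if_neg (by omega)]
        have hmod : (s + 1) % (n - 1) < n - 1 := Nat.mod_lt _ (by omega)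
        split
        · omega
        · split
          · split <;> omega
          · split
            · split <;> omega
            · omega
    exact ih hd (fun b hb => hw b (by simp [hb]))

lemma lq_Ln {n : ℕ} {w : List (Fin 5)} :
    leftQuotient (Ln n) w = KL n (runF n 0 w) := leftQuotient_KL w

lemma nil_mem_KL_iff {n j : ℕ} : [] ∈ KL n j ↔ j = n - 1 := by
  rw [mem_KL, runF_nil]

lemma KL_injOn {n : ℕ} (hn : 3 ≤ n) : Set.InjOn (KL n) {i | i ≤ n - 1} := by
  intro i hi j hj hEq
  simp only [Set.mem_setOf_eq] at hi hj
  by_contra hne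
  -- wlog via cases on which one is n-1
  have key : ∀ i j : ℕ, i ≤ n - 1 → j ≤ n - 1 → i ≠ j → KL n i = KL n j → False := by
    intro i j hi hj hne hEq
    by_cases hti : i = n - 1
    · have : ([] : List (Fin 5)) ∈ KL n i := nil_mem_KL_iff.mpr hti
      rw [hEq] at this
      exact hne (by rw [nil_mem_KL_iff.mp this, hti])
    · have hi2 : i ≤ n - 2 := by omega
      have h1 : zseq n i ∈ KL n i := (zseq_mem_KL hn hi hi2).mpr (Or.inl rfl)
      rw [hEq] at h1
      rcases (zseq_mem_KL hn hj hi2).mp h1 with h | h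
      · exact hne (h.symm)
      · subst h
        have : ([] : List (Fin 5)) ∈ KL n (n - 1) := nil_mem_KL_iff.mpr rfl
        rw [← hEq] at this
        exact hti (nil_mem_KL_iff.mp this)
  exact key i j hi hj hne hEq

lemma quotSet_Ln {n : ℕ} (hn : 3 ≤ n) : quotientSet (Ln n) = KL n '' {i | i ≤ n - 1} := by
  ext K
  constructor
  · rintro ⟨w, hw, rfl⟩
    rw [alph_Ln hn] at hw
    rw [lq_Ln]
    refine ⟨runF n 0 w, ?_, rfl⟩
    simp only [Set.mem_setOf_eq]
    exact runF_le_of_no_zero hn (by omega) (fun a ha => mem_SigB_ne_zero (hw a ha))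
  · rintro ⟨i, hi, rfl⟩
    simp only [Set.mem_setOf_eq] at hi
    by_cases hi2 : i ≤ n - 2
    · refine ⟨List.replicate i 1, ?_, ?_⟩
      · intro a ha
        rw [List.eq_of_mem_replicate ha, alph_Ln hn]
        simp [SigB]
      · rw [lq_Ln, runF_replicate_one hn (by omega)]
        congr 1
        rw [Nat.zero_add, Nat.mod_eq_of_lt (by omega)]
    · have hitop : i = n - 1 := by omega
      refine ⟨zseq n 0, ?_, ?_⟩
      · intro a ha
        rw [alph_Ln hn]
        exact ne_zero_mem_SigB (zseq_no_zero a ha)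
      · rw [lq_Ln, runF_zseq_self hn (by omega), hitop]

lemma hasComplexity_Ln {n : ℕ} (hn : 3 ≤ n) : HasComplexity (Ln n) n := by
  rw [HasComplexity, quotSet_Ln hn]
  have hset : {i | i ≤ n - 1} = ↑(Finset.range n) := by
    ext i
    simp
    omega
  constructor
  · exact (Set.Finite.image _ (by rw [hset]; exact (Finset.range n).finite_toSet))
  · rw [Set.ncard_image_of_injOn (KL_injOn hn), hset, Set.ncard_coe_finset, Finset.card_range]

lemma ncard_SigA : SigA.ncard = 4 := by
  have : SigA = ↑({0, 1, 2, 3} : Finset (Fin 5)) := by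
    ext a; simp [SigA]
  rw [this, Set.ncard_coe_finset]
  decide

lemma ncard_SigB : SigB.ncard = 4 := by
  have : SigB = ↑({1, 2, 3, 4} : Finset (Fin 5)) := by
    ext a; simp [SigB]
  rw [this, Set.ncard_coe_finset]
  decide

/-! ### Suffix run sets and reachability -/

/-- The set of states reachable as runs of suffixes of `y` from state 0. -/
def rsF (n : ℕ) (y : List (Fin 5)) : Finset ℕ := (y.tails.map (fun v => runF n 0 v)).toFinset

lemma mem_rsF {n : ℕ} {y : List (Fin 5)} {i : ℕ} :
    i ∈ rsF n y ↔ ∃ v, v <:+ y ∧ runF n 0 v = i := by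
  rw [rsF, List.mem_toFinset, List.mem_map]
  constructor
  · rintro ⟨v, hv, rfl⟩; exact ⟨v, (List.mem_tails _ _).mp hv, rfl⟩
  · rintro ⟨v, hv, rfl⟩; exact ⟨v, (List.mem_tails _ _).mpr hv, rfl⟩

lemma zero_mem_rsF {n : ℕ} {y : List (Fin 5)} : 0 ∈ rsF n y :=
  mem_rsF.mpr ⟨[], List.nil_suffix, rfl⟩

lemma rsF_nil {n : ℕ} : rsF n [] = {0} := rfl

lemma rsF_snoc {n : ℕ} {y : List (Fin 5)} {a : Fin 5} :
    rsF n (y ++ [a]) = insert 0 ((rsF n y).image (dlt n a)) := by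
  ext i
  simp only [Finset.mem_insert, Finset.mem_image]
  rw [rsF, List.mem_toFinset, List.mem_map]
  constructor
  · rintro ⟨v, hv, rfl⟩
    rw [List.tails_append] at hv
    rcases List.mem_append.mp hv with h | h
    · obtain ⟨v', hv', rfl⟩ := List.mem_map.mp h
      refine Or.inr ⟨runF n 0 v', mem_rsF.mpr ⟨v', (List.mem_tails _ _).mp hv', rfl⟩, ?_⟩
      rw [runF_append]; rfl
    · have hv0 : v = [] := by
        have h2 : ([a] : List (Fin 5)).tails.tail = [[]] := rfl
        rw [h2] at h
        simpa using h
      subst hv0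
      exact Or.inl rfl
  · rintro (rfl | ⟨s, hs, rfl⟩)
    · exact ⟨[], by rw [List.mem_tails]; exact List.nil_suffix, rfl⟩
    · obtain ⟨v', hv', rfl⟩ := mem_rsF.mp hs
      refine ⟨v' ++ [a], ?_, by rw [runF_append]; rfl⟩
      rw [List.mem_tails]
      obtain ⟨u, hu⟩ := hv'
      exact ⟨u, by rw [← List.append_assoc, hu]⟩

lemma dlt_one_succ {n : ℕ} (hn : 3 ≤ n) {s : ℕ} (hs : s ≤ n - 3) : dlt n 1 s = s + 1 := by
  unfold dlt
  rw [if_neg (by decide), if_neg (by omega), if_neg (by omega), if_pos rfl]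
  exact Nat.mod_eq_of_lt (by omega)

lemma dlt_two_succ {n : ℕ} (hn : 3 ≤ n) {s : ℕ} (hs : 1 ≤ s ∧ s ≤ n - 3) : dlt n 2 s = s + 1 := by
  unfold dlt
  rw [if_neg (by decide), if_neg (by omega), if_neg (by omega), if_neg (by decide), if_pos rfl,
    if_neg (by omega)]
  exact Nat.mod_eq_of_lt (by omega)

lemma dlt_one_zero {n : ℕ} (hn : 3 ≤ n) : dlt n 1 0 = 1 := by
  have := dlt_one_succ hn (s := 0) (by omega)
  simpa using this

lemma dlt_two_zero {n : ℕ} (hn : 3 ≤ n) : dlt n 2 0 = 0 := by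
  unfold dlt
  rw [if_neg (by decide), if_neg (by omega), if_neg (by omega), if_neg (by decide), if_pos rfl,
    if_pos rfl]

lemma dlt_four {n : ℕ} (hn : 3 ≤ n) {s : ℕ} (hs : s ≤ n - 2) : dlt n 4 s = s := by
  unfold dlt
  rw [if_neg (by decide), if_neg (by omega), if_neg (by omega), if_neg (by decide),
    if_neg (by decide), if_neg (by decide)]

/-- Shift-register reachability: every subset of `{1, …, n-2}` together with `0`
is the suffix-run set of a word over `{1,2}`. -/
lemma reach {n : ℕ} (hn : 3 ≤ n) :
    ∀ T : Finset ℕ, (∀ x ∈ T, 1 ≤ x ∧ x ≤ n - 2) →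
      ∃ y : List (Fin 5), (∀ a ∈ y, a = 1 ∨ a = 2) ∧ rsF n y = insert 0 T := by
  suffices H : ∀ k : ℕ, ∀ T : Finset ℕ, T.sum id = k → (∀ x ∈ T, 1 ≤ x ∧ x ≤ n - 2) →
      ∃ y : List (Fin 5), (∀ a ∈ y, a = 1 ∨ a = 2) ∧ rsF n y = insert 0 T by
    intro T hT
    exact H _ T rfl hT
  intro k
  induction k using Nat.strong_induction_on with
  | _ k ih =>
    intro T hsum hT
    by_cases hT0 : T = ∅
    · subst hT0
      exact ⟨[], by simp, by rw [rsF_nil]; simp⟩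
    · have hTne : T.Nonempty := Finset.nonempty_iff_ne_empty.mpr hT0
      set T' : Finset ℕ := (T.erase 1).image (fun x => x - 1) with hT'def
      have hT'elts : ∀ x ∈ T', 1 ≤ x ∧ x ≤ n - 3 := by
        intro x hx
        obtain ⟨t, ht, rfl⟩ := Finset.mem_image.mp hx
        have h1 := Finset.mem_of_mem_erase ht
        have h2 := Finset.ne_of_mem_erase ht
        have := hT t h1
        omega
      have hksum : 1 ≤ k := by
        obtain ⟨t, ht⟩ := hTne
        have h1 := hT t ht
        have : t ≤ T.sum id := Finset.single_le_sum (fun x _ => Nat.zero_le (id x)) ht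
        omega
      have hsum' : T'.sum id < k := by
        have hinj : Set.InjOn (fun x => x - 1) (T.erase 1) := by
          intro a haa b hbb hab
          have ha' := hT a (Finset.mem_of_mem_erase haa)
          have hb' := hT b (Finset.mem_of_mem_erase hbb)
          have ha2 := Finset.ne_of_mem_erase haa
          have hb2 := Finset.ne_of_mem_erase hbb
          simp only at hab
          omega
        have hsi : T'.sum id = (T.erase 1).sum (fun x => x - 1) := by
          rw [hT'def, Finset.sum_image (fun a ha b hb => hinj ha hb)]
          rfl
        by_cases h1T : 1 ∈ T
        · have hadd : id 1 + (T.erase 1).sum id = T.sum id := Finset.add_sum_erase _ id h1T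
          have hle : (T.erase 1).sum (fun x => x - 1) ≤ (T.erase 1).sum id :=
            Finset.sum_le_sum (fun x _ => by simp only [id_eq]; omega)
          simp only [id_eq] at hadd hle hsi hsum ⊢
          omega
        · rw [Finset.erase_eq_of_notMem h1T] at hsi
          have hlt : T.sum (fun x => x - 1) < T.sum id := by
            apply Finset.sum_lt_sum_of_nonempty hTne
            intro x hx
            have h1 := hT x hx
            have h2 : x ≠ 1 := fun h => h1T (h ▸ hx)
            simp only [id_eq]
            omega
          simp only [id_eq] at hlt hsi hsum ⊢
          omega
      obtain ⟨y', hy', hrs'⟩ := ih _ hsum' T' rfl (fun x hx => ⟨(hT'elts x hx).1, by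
        have := hT'elts x hx; omega⟩)
      by_cases h1T : 1 ∈ T
      · refine ⟨y' ++ [1], ?_, ?_⟩
        · intro a ha
          rcases List.mem_append.mp ha with h | h
          · exact hy' a h
          · simp at h; exact Or.inl h
        · rw [rsF_snoc, hrs', Finset.image_insert, dlt_one_zero hn]
          have himg : T'.image (dlt n 1) = T.erase 1 := by
            rw [hT'def, Finset.image_image]
            have : ∀ t ∈ T.erase 1, (dlt n 1 ∘ fun x => x - 1) t = t := by
              intro t ht
              have h1 := hT t (Finset.mem_of_mem_erase ht)
              have h2 := Finset.ne_of_mem_erase ht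
              simp only [Function.comp_apply]
              rw [dlt_one_succ hn (by omega)]
              omega
            rw [Finset.image_congr (fun t ht => this t ht), Finset.image_id']
          rw [himg, Finset.insert_erase h1T]
      · refine ⟨y' ++ [2], ?_, ?_⟩
        · intro a ha
          rcases List.mem_append.mp ha with h | h
          · exact hy' a h
          · simp at h; exact Or.inr h
        · rw [rsF_snoc, hrs', Finset.image_insert, dlt_two_zero hn]
          have himg : T'.image (dlt n 2) = T.erase 1 := by
            rw [hT'def, Finset.image_image]
            have : ∀ t ∈ T.erase 1, (dlt n 2 ∘ fun x => x - 1) t = t := by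
              intro t ht
              have h1 := hT t (Finset.mem_of_mem_erase ht)
              have h2 := Finset.ne_of_mem_erase ht
              simp only [Function.comp_apply]
              rw [dlt_two_succ hn (by omega)]
              omega
            rw [Finset.image_congr (fun t ht => this t ht), Finset.image_id']
          rw [himg, Finset.erase_eq_of_notMem h1T, Finset.insert_idem]

/-! ### Quotients of the product -/

/-- Quotient shape with the `Σ'*L` component. -/
def PhiB (n : ℕ) (R : Finset ℕ) : Language (Fin 5) :=
  ofS (toS (starOf SigA * Ln n) ∪ ⋃ i ∈ R, toS (KL n i))

/-- Quotient shape without the `Σ'*L` component. -/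
def PhiC (n : ℕ) (R : Finset ℕ) : Language (Fin 5) :=
  ofS (⋃ i ∈ R, toS (KL n i))

lemma mem_PhiB {n : ℕ} {R : Finset ℕ} {x : List (Fin 5)} :
    x ∈ PhiB n R ↔ x ∈ starOf SigA * Ln n ∨ ∃ i ∈ R, x ∈ KL n i := by
  show x ∈ toS (starOf SigA * Ln n) ∪ ⋃ i ∈ R, toS (KL n i) ↔ _
  simp only [Set.mem_union, Set.mem_iUnion, mem_toS, exists_prop]

lemma mem_PhiC {n : ℕ} {R : Finset ℕ} {x : List (Fin 5)} :
    x ∈ PhiC n R ↔ ∃ i ∈ R, x ∈ KL n i := by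
  show x ∈ ⋃ i ∈ R, toS (KL n i) ↔ _
  simp only [Set.mem_iUnion, mem_toS, exists_prop]

lemma four_not_SigA : (4 : Fin 5) ∉ SigA := by
  simp only [SigA, Set.mem_insert_iff, Set.mem_singleton_iff]
  push_neg
  exact ⟨by decide, by decide, by decide, by decide⟩

lemma mem_SigA_of_ne {a : Fin 5} (h4 : a ≠ 4) : a ∈ SigA := by
  fin_cases a <;> simp_all [SigA]

lemma mul_empty_left {A B : Language (Fin 5)} (h : toS A = ∅) : toS (A * B) = ∅ := by
  ext x
  simp only [Set.mem_empty_iff_false, iff_false, mem_toS]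
  intro hx
  obtain ⟨u, hu, v, hv, huv⟩ := Language.mem_mul.mp hx
  have : u ∈ toS A := hu
  rw [h] at this
  exact this

lemma nil_notin_mul_Ln {n : ℕ} (hn : 3 ≤ n) (A : Language (Fin 5)) :
    ([] : List (Fin 5)) ∉ A * Ln n := by
  intro h
  obtain ⟨u, hu, v, hv, huv⟩ := Language.mem_mul.mp h
  have hv0 : v = [] := (List.append_eq_nil_iff.mp huv).2
  subst hv0
  rw [Ln, mem_KL, runF_nil] at hv
  omega

lemma take_rep_mem_Lp {m : ℕ} (hm : 3 ≤ m) {l : List (Fin 5)} (t : ℕ)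
    (hl : ∀ a ∈ l.take t, a ∈ SigA) :
    (List.replicate (m - 1) (0 : Fin 5) ++ l).take (m - 1 + t) ∈ Lp m := by
  have hlen : (List.replicate (m - 1) (0 : Fin 5)).length = m - 1 := by simp
  have heq : (List.replicate (m - 1) (0 : Fin 5) ++ l).take
      ((List.replicate (m - 1) (0 : Fin 5)).length + t) =
      List.replicate (m - 1) (0 : Fin 5) ++ l.take t := List.take_length_add_append t
  rw [hlen] at heq
  rw [heq]
  constructor
  · intro a ha
    rcases List.mem_append.mp ha with h | h
    · rw [List.eq_of_mem_replicate h]; exact zero_mem_SigA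
    · exact hl a h
  · rw [List.count_append, List.count_replicate]
    simp

lemma take_small_not_Lp {m : ℕ} (hm : 3 ≤ m) {l : List (Fin 5)} {j : ℕ} (hj : j < m - 1) :
    (List.replicate (m - 1) (0 : Fin 5) ++ l).take j ∉ Lp m := by
  intro h
  have hcnt := h.2
  rw [List.take_append_of_le_length (by simp; omega), List.take_replicate,
    List.count_replicate] at hcnt
  simp at hcnt
  omega

lemma drop_rep {m : ℕ} {l : List (Fin 5)} (t : ℕ) :
    (List.replicate (m - 1) (0 : Fin 5) ++ l).drop (m - 1 + t) = l.drop t := by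
  have hlen : (List.replicate (m - 1) (0 : Fin 5)).length = m - 1 := by simp
  have heq : (List.replicate (m - 1) (0 : Fin 5) ++ l).drop
      ((List.replicate (m - 1) (0 : Fin 5)).length + t) = l.drop t := List.drop_length_add_append t
  rw [hlen] at heq
  exact heq

lemma quotA {m n : ℕ} (hm : 3 ≤ m) (hn : 3 ≤ n) {i : ℕ} (hi : i ≤ m - 2) :
    leftQuotient (Lp m * Ln n) (List.replicate i 0) = q0 (m - 1 - i) * Ln n := by
  apply toS_inj
  rw [leftQuotient_mul]
  have hJ : {j | j ≤ (List.replicate i (0 : Fin 5)).length ∧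
      (List.replicate i (0 : Fin 5)).take j ∈ Lp m} = ∅ := by
    ext j
    simp only [Set.mem_setOf_eq, Set.mem_empty_iff_false, iff_false, not_and]
    intro hj hmem
    have hcnt := hmem.2
    rw [List.take_replicate, List.count_replicate] at hcnt
    simp at hcnt
    omega
  rw [hJ]
  have hq' : leftQuotient (Lp m) (List.replicate i 0) = q0 (m - 1 - i) := by
    rw [lq_Lp (fun a ha => by rw [List.eq_of_mem_replicate ha]; exact zero_mem_SigA),
      List.count_replicate]
    simp
  rw [hq']
  simp

lemma quotB {m n : ℕ} (hm : 3 ≤ m) (hn : 3 ≤ n) {y : List (Fin 5)}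
    (hy : ∀ a ∈ y, a ≠ 0 ∧ a ≠ 4) :
    leftQuotient (Lp m * Ln n) (List.replicate (m - 1) 0 ++ y) = PhiB n (rsF n y) := by
  apply toS_inj
  rw [leftQuotient_mul]
  have hySigA : ∀ a ∈ y, a ∈ SigA := fun a ha => mem_SigA_of_ne (hy a ha).2
  have hq' : leftQuotient (Lp m) (List.replicate (m - 1) 0 ++ y) = starOf SigA := by
    rw [lq_Lp (by
      intro a ha
      rcases List.mem_append.mp ha with h | h
      · rw [List.eq_of_mem_replicate h]; exact zero_mem_SigA
      · exact hySigA a h)]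
    rw [List.count_append, List.count_replicate, List.count_eq_zero.mpr
      (fun h => (hy 0 h).1 rfl)]
    simp [← q0_zero]
  have hU : (⋃ j ∈ {j | j ≤ (List.replicate (m - 1) (0 : Fin 5) ++ y).length ∧
        (List.replicate (m - 1) (0 : Fin 5) ++ y).take j ∈ Lp m},
      toS (leftQuotient (Ln n) ((List.replicate (m - 1) (0 : Fin 5) ++ y).drop j))) =
      ⋃ i ∈ rsF n y, toS (KL n i) := by
    ext x
    simp only [Set.mem_iUnion, exists_prop, Set.mem_setOf_eq]
    constructor
    · rintro ⟨j, ⟨hjlen, hjLp⟩, hx⟩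
      have hjge : m - 1 ≤ j := by
        by_contra hlt
        exact take_small_not_Lp hm (by omega) hjLp
      set t := j - (m - 1) with htdef
      have hjt : j = m - 1 + t := by omega
      rw [hjt, drop_rep, lq_Ln] at hx
      exact ⟨runF n 0 (y.drop t), mem_rsF.mpr ⟨y.drop t, List.drop_suffix t y, rfl⟩, hx⟩
    · rintro ⟨i, hiR, hx⟩
      obtain ⟨v, hv, rfl⟩ := mem_rsF.mp hiR
      obtain ⟨u, hu⟩ := hv
      refine ⟨m - 1 + u.length, ⟨?_, ?_⟩, ?_⟩
      · simp only [List.length_append, List.length_replicate]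
        have : u.length + v.length = y.length := by rw [← hu]; simp
        omega
      · exact take_rep_mem_Lp hm u.length
          (fun a ha => hySigA a (List.take_subset u.length y ha))
      · rw [drop_rep, ← hu, List.drop_left, lq_Ln]
        exact hx
  rw [hq', hU]
  rfl

lemma quotC {m n : ℕ} (hm : 3 ≤ m) (hn : 3 ≤ n) {y z : List (Fin 5)}
    (hy : ∀ a ∈ y, a ≠ 0 ∧ a ≠ 4) :
    leftQuotient (Lp m * Ln n) (List.replicate (m - 1) 0 ++ (y ++ 4 :: z)) =
      PhiC n ((rsF n y).image (fun s => runF n s (4 :: z))) := by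
  apply toS_inj
  rw [leftQuotient_mul]
  have hySigA : ∀ a ∈ y, a ∈ SigA := fun a ha => mem_SigA_of_ne (hy a ha).2
  have h4w : (4 : Fin 5) ∈ List.replicate (m - 1) (0 : Fin 5) ++ (y ++ 4 :: z) := by
    simp
  have hq' : toS (leftQuotient (Lp m) (List.replicate (m - 1) 0 ++ (y ++ 4 :: z))) = ∅ := by
    apply leftQuotient_eq_empty h4w
    rw [alph_Lp hm]
    exact four_not_SigA
  have hmul : toS (leftQuotient (Lp m) (List.replicate (m - 1) 0 ++ (y ++ 4 :: z)) * Ln n) = ∅ :=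
    mul_empty_left hq'
  have hU : (⋃ j ∈ {j | j ≤ (List.replicate (m - 1) (0 : Fin 5) ++ (y ++ 4 :: z)).length ∧
        (List.replicate (m - 1) (0 : Fin 5) ++ (y ++ 4 :: z)).take j ∈ Lp m},
      toS (leftQuotient (Ln n) ((List.replicate (m - 1) (0 : Fin 5) ++ (y ++ 4 :: z)).drop j))) =
      ⋃ i ∈ (rsF n y).image (fun s => runF n s (4 :: z)), toS (KL n i) := by
    ext x
    simp only [Set.mem_iUnion, exists_prop, Set.mem_setOf_eq]
    constructor
    · rintro ⟨j, ⟨hjlen, hjLp⟩, hx⟩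
      have hjge : m - 1 ≤ j := by
        by_contra hlt
        exact take_small_not_Lp hm (by omega) hjLp
      set t := j - (m - 1) with htdef
      have hjt : j = m - 1 + t := by omega
      have htle : t ≤ y.length := by
        by_contra hgt
        push_neg at hgt
        have h4take : (4 : Fin 5) ∈ (List.replicate (m - 1) (0 : Fin 5) ++ (y ++ 4 :: z)).take j := by
          rw [hjt]
          have hlen : (List.replicate (m - 1) (0 : Fin 5)).length = m - 1 := by simp
          have heq : (List.replicate (m - 1) (0 : Fin 5) ++ (y ++ 4 :: z)).take
              ((List.replicate (m - 1) (0 : Fin 5)).length + t) =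
              List.replicate (m - 1) (0 : Fin 5) ++ (y ++ 4 :: z).take t := List.take_length_add_append t
          rw [hlen] at heq
          rw [heq]
          apply List.mem_append.mpr
          refine Or.inr ?_
          have h2 : (y ++ 4 :: z).take t = y ++ (4 :: z).take (t - y.length) := by
            have h2a : (y ++ 4 :: z).take (y.length + (t - y.length)) =
                y ++ (4 :: z).take (t - y.length) := List.take_length_add_append _
            have h2b : y.length + (t - y.length) = t := by omega
            rw [h2b] at h2a
            exact h2a
          rw [h2]
          apply List.mem_append.mpr
          refine Or.inr ?_
          have h3 : (4 :: z).take (t - y.length) = 4 :: z.take (t - y.length - 1) := by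
            obtain ⟨k, hk⟩ : ∃ k, t - y.length = k + 1 := ⟨t - y.length - 1, by omega⟩
            rw [hk, List.take_succ_cons]
            simp
          rw [h3]
          simp
        exact four_not_SigA (hjLp.1 4 h4take)
      rw [hjt, drop_rep, List.drop_append_of_le_length htle, lq_Ln, runF_append] at hx
      refine ⟨runF n (runF n 0 (y.drop t)) (4 :: z), ?_, hx⟩
      exact Finset.mem_image.mpr ⟨runF n 0 (y.drop t),
        mem_rsF.mpr ⟨y.drop t, List.drop_suffix t y, rfl⟩, rfl⟩
    · rintro ⟨i, hiR, hx⟩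
      obtain ⟨s, hs, rfl⟩ := Finset.mem_image.mp hiR
      obtain ⟨v, hv, rfl⟩ := mem_rsF.mp hs
      obtain ⟨u, hu⟩ := hv
      refine ⟨m - 1 + u.length, ⟨?_, ?_⟩, ?_⟩
      · simp only [List.length_append, List.length_replicate, List.length_cons]
        have : u.length + v.length = y.length := by rw [← hu]; simp
        omega
      · apply take_rep_mem_Lp hm u.length
        intro a ha
        have hule : u.length ≤ y.length := by
          have : u.length + v.length = y.length := by rw [← hu]; simp
          omega
        rw [List.take_append_of_le_length hule, ← hu,
          List.take_append_of_le_length le_rfl, List.take_length] at ha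
        exact hySigA a (by rw [← hu]; exact List.mem_append.mpr (Or.inl ha))
      · have hdrop : (y ++ 4 :: z).drop u.length = v ++ 4 :: z := by
          rw [← hu, List.drop_append_of_le_length (by simp), List.drop_left]
        rw [drop_rep, hdrop, lq_Ln, runF_append]
        exact hx
  rw [hmul, hU, Set.empty_union]
  rfl

lemma quotE {m n : ℕ} (hm : 3 ≤ m) (hn : 3 ≤ n) :
    leftQuotient (Lp m * Ln n) [4] = PhiC n ∅ := by
  apply toS_inj
  rw [leftQuotient_mul]
  have hq' : toS (leftQuotient (Lp m) [4]) = ∅ := by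
    apply leftQuotient_eq_empty (by simp : (4 : Fin 5) ∈ [4])
    rw [alph_Lp hm]
    exact four_not_SigA
  have hmul : toS (leftQuotient (Lp m) [4] * Ln n) = ∅ := mul_empty_left hq'
  have hJ : {j | j ≤ ([4] : List (Fin 5)).length ∧ ([4] : List (Fin 5)).take j ∈ Lp m} = ∅ := by
    ext j
    simp only [Set.mem_setOf_eq, Set.mem_empty_iff_false, iff_false, not_and]
    intro hj hmem
    simp only [List.length_cons, List.length_nil] at hj
    interval_cases j
    · have := hmem.2
      simp at this
      omega
    · exact four_not_SigA (hmem.1 4 (by simp))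
  rw [hmul, hJ]
  simp only [Set.mem_empty_iff_false, Set.iUnion_of_empty, Set.iUnion_empty, Set.empty_union]
  have : toS (PhiC n (∅ : Finset ℕ)) = ∅ := by
    ext x
    simp only [mem_toS, Set.mem_empty_iff_false, iff_false]
    intro hx
    obtain ⟨i, hi, -⟩ := mem_PhiC.mp hx
    simp at hi
  rw [this]

/-! ### Membership tests for distinguishing quotients -/

lemma countA {n r : ℕ} {x : List (Fin 5)} (hx : x ∈ q0 r * Ln n) : r ≤ x.count 0 := by
  obtain ⟨u, hu, v, hv, huv⟩ := Language.mem_mul.mp hx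
  rw [← huv, List.count_append]
  have := hu.2
  omega

lemma zq_mem_A {n : ℕ} (hn : 3 ≤ n) (r : ℕ) :
    List.replicate r 0 ++ zseq n 0 ∈ q0 r * Ln n := by
  refine Language.mem_mul.mpr ⟨List.replicate r 0, ?_, zseq n 0, zseq_mem_Ln hn, rfl⟩
  refine ⟨fun a ha => by rw [List.eq_of_mem_replicate ha]; exact zero_mem_SigA, ?_⟩
  rw [List.count_replicate]
  simp

lemma count_zq {n r : ℕ} : (List.replicate r (0 : Fin 5) ++ zseq n 0).count 0 = r := by
  rw [List.count_append, List.count_replicate, List.count_eq_zero.mpr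
    (fun h => zseq_no_zero 0 h rfl)]
  simp

lemma count_zseq {n i : ℕ} : (zseq n i).count 0 = 0 :=
  List.count_eq_zero.mpr (fun h => zseq_no_zero 0 h rfl)

lemma zseq_drop_notin_Ln {n : ℕ} (hn : 3 ≤ n) {i : ℕ} (hi1 : 1 ≤ i) (hi2 : i ≤ n - 2) :
    ∀ t, (zseq n i).drop t ∉ Ln n := by
  intro t h
  rw [Ln, mem_KL] at h
  set k := n - 2 - i with hk
  have hk3 : k ≤ n - 3 := by omega
  by_cases ht : t ≤ k
  · have hdrop : (zseq n i).drop t = List.replicate (k - t) 1 ++ [3] := by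
      rw [zseq, List.drop_append_of_le_length (by simp; omega), List.drop_replicate]
    rw [hdrop, runF_append, runF_replicate_one hn (by omega)] at h
    rw [Nat.zero_add, Nat.mod_eq_of_lt (by omega)] at h
    have h3 : runF n (k - t) [(3 : Fin 5)] = dlt n 3 (k - t) := rfl
    rw [h3, dlt_three hn (by omega)] at h
    split at h <;> omega
  · have hdrop : (zseq n i).drop t = [] := by
      apply List.drop_eq_nil_of_le
      rw [zseq]
      simp
      omega
    rw [hdrop, runF_nil] at h
    omega

lemma zseq_notin_SL {n : ℕ} (hn : 3 ≤ n) {i : ℕ} (hi1 : 1 ≤ i) (hi2 : i ≤ n - 2) :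
    zseq n i ∉ starOf SigA * Ln n := by
  intro h
  obtain ⟨u, hu, v, hv, huv⟩ := Language.mem_mul.mp h
  have hveq : v = (zseq n i).drop u.length := by
    rw [← huv, List.drop_left]
  exact zseq_drop_notin_Ln hn hi1 hi2 u.length (hveq ▸ hv)

lemma zseq_mem_PhiB_iff {n : ℕ} (hn : 3 ≤ n) {i : ℕ} (hi1 : 1 ≤ i) (hi2 : i ≤ n - 2)
    {R : Finset ℕ} (hR : ∀ j ∈ R, j ≤ n - 2) :
    zseq n i ∈ PhiB n R ↔ i ∈ R := by
  rw [mem_PhiB]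
  constructor
  · rintro (h | ⟨j, hj, hmem⟩)
    · exact absurd h (zseq_notin_SL hn hi1 hi2)
    · rcases (zseq_mem_KL hn (by have := hR j hj; omega) hi2).mp hmem with h | h
      · exact h ▸ hj
      · have := hR j hj; omega
  · intro h
    exact Or.inr ⟨i, h, (zseq_mem_KL hn (by omega) hi2).mpr (Or.inl rfl)⟩

lemma zseq_mem_PhiC_iff {n : ℕ} (hn : 3 ≤ n) {i : ℕ} (hi2 : i ≤ n - 2)
    {R : Finset ℕ} (hR : ∀ j ∈ R, j ≤ n - 2) :
    zseq n i ∈ PhiC n R ↔ i ∈ R := by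
  rw [mem_PhiC]
  constructor
  · rintro ⟨j, hj, hmem⟩
    rcases (zseq_mem_KL hn (by have := hR j hj; omega) hi2).mp hmem with h | h
    · exact h ▸ hj
    · have := hR j hj; omega
  · intro h
    exact ⟨i, h, (zseq_mem_KL hn (by omega) hi2).mpr (Or.inl rfl)⟩

lemma zseq0_mem_PhiB {n : ℕ} (hn : 3 ≤ n) {R : Finset ℕ} (hR : 0 ∈ R) :
    zseq n 0 ∈ PhiB n R :=
  mem_PhiB.mpr (Or.inr ⟨0, hR, zseq_mem_Ln hn⟩)

lemma nil_mem_PhiB_iff {n : ℕ} (hn : 3 ≤ n) {R : Finset ℕ} :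
    ([] : List (Fin 5)) ∈ PhiB n R ↔ n - 1 ∈ R := by
  rw [mem_PhiB]
  constructor
  · rintro (h | ⟨j, hj, hmem⟩)
    · exact absurd h (nil_notin_mul_Ln hn _)
    · rwa [← nil_mem_KL_iff.mp hmem]
  · intro h
    exact Or.inr ⟨n - 1, h, nil_mem_KL_iff.mpr rfl⟩

lemma nil_mem_PhiC_iff {n : ℕ} {R : Finset ℕ} :
    ([] : List (Fin 5)) ∈ PhiC n R ↔ n - 1 ∈ R := by
  rw [mem_PhiC]
  constructor
  · rintro ⟨j, hj, hmem⟩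
    rwa [← nil_mem_KL_iff.mp hmem]
  · intro h
    exact ⟨n - 1, h, nil_mem_KL_iff.mpr rfl⟩

lemma d1_mem_PhiB {n : ℕ} (hn : 3 ≤ n) (R : Finset ℕ) :
    (0 :: zseq n 0) ∈ PhiB n R := by
  refine mem_PhiB.mpr (Or.inl (Language.mem_mul.mpr ⟨[0], ?_, zseq n 0, zseq_mem_Ln hn, rfl⟩))
  intro a ha
  simp at ha
  rw [ha]
  exact zero_mem_SigA

lemma no_zero_PhiC {n : ℕ} (hn : 3 ≤ n) {R : Finset ℕ} {x : List (Fin 5)}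
    (hx : x ∈ PhiC n R) : (0 : Fin 5) ∉ x := by
  obtain ⟨j, hj, hmem⟩ := mem_PhiC.mp hx
  intro h0
  exact mem_KL_no_zero (by omega) hmem 0 h0 rfl

lemma zero_mem_zq {n r : ℕ} (hr : 1 ≤ r) :
    (0 : Fin 5) ∈ List.replicate r (0 : Fin 5) ++ zseq n 0 := by
  apply List.mem_append.mpr
  exact Or.inl (List.mem_replicate.mpr ⟨by omega, rfl⟩)

/-- Every letter occurs in the product. -/
lemma alph_P {m n : ℕ} (hm : 3 ≤ m) (hn : 3 ≤ n) (a : Fin 5) :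
    a ∈ alphabetOf (Lp m * Ln n) := by
  by_cases h4 : a = 4
  · subst h4
    refine ⟨List.replicate (m - 1) 0, zseq n 0, ?_⟩
    refine Language.mem_mul.mpr ⟨List.replicate (m - 1) 0, ?_, 4 :: zseq n 0, ?_, by simp⟩
    · refine ⟨fun b hb => by rw [List.eq_of_mem_replicate hb]; exact zero_mem_SigA, ?_⟩
      rw [List.count_replicate]; simp
    · rw [Ln, mem_KL, runF_cons, dlt_four hn (by omega)]
      exact runF_zseq_self hn (by omega)
  · refine ⟨List.replicate (m - 1) 0, zseq n 0, ?_⟩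
    refine Language.mem_mul.mpr ⟨List.replicate (m - 1) 0 ++ [a], ?_, zseq n 0,
      zseq_mem_Ln hn, by simp⟩
    refine ⟨fun b hb => ?_, ?_⟩
    · rcases List.mem_append.mp hb with h | h
      · rw [List.eq_of_mem_replicate h]; exact zero_mem_SigA
      · simp at h; rw [h]; exact mem_SigA_of_ne h4
    · rw [List.count_append, List.count_replicate]
      simp

/-! ### The injective family of quotients -/

/-- Index type for the lower bound. -/
abbrev Idx (m n : ℕ) := (Fin (m - 1) ⊕ Finset (Fin (n - 2))) ⊕ (Finset (Fin (n - 1)) ⊕ Bool)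

/-- The family of distinct quotients of the product. -/
def PhiMap (m n : ℕ) : Idx m n → Language (Fin 5)
  | Sum.inl (Sum.inl i) => q0 (m - 1 - i.val) * Ln n
  | Sum.inl (Sum.inr T) => PhiB n (insert 0 (T.image (fun j => j.val + 1)))
  | Sum.inr (Sum.inl U) => PhiC n (U.image (fun j => j.val))
  | Sum.inr (Sum.inr false) => PhiB n {0, n - 1}
  | Sum.inr (Sum.inr true) => PhiC n {0, n - 1}

lemma lift2_le {n : ℕ} (hn : 3 ≤ n) (T : Finset (Fin (n - 2))) :
    ∀ j ∈ insert 0 (T.image (fun j => j.val + 1)), j ≤ n - 2 := by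
  intro j hj
  rcases Finset.mem_insert.mp hj with h | h
  · omega
  · obtain ⟨j', -, rfl⟩ := Finset.mem_image.mp h
    have := j'.isLt
    omega

lemma lift2_zero {n : ℕ} (T : Finset (Fin (n - 2))) :
    0 ∈ insert 0 (T.image (fun j => j.val + 1)) := Finset.mem_insert_self _ _

lemma lift2_mem {n : ℕ} (T : Finset (Fin (n - 2))) (j : Fin (n - 2)) :
    (j : ℕ) + 1 ∈ insert 0 (T.image (fun j => j.val + 1)) ↔ j ∈ T := by
  rw [Finset.mem_insert]
  constructor
  · rintro (h | h)
    · omega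
    · obtain ⟨j', hj', hEq⟩ := Finset.mem_image.mp h
      have : j' = j := Fin.ext (by omega)
      exact this ▸ hj'
  · intro h
    exact Or.inr (Finset.mem_image.mpr ⟨j, h, rfl⟩)

lemma lift1_le {n : ℕ} (hn : 3 ≤ n) (U : Finset (Fin (n - 1))) :
    ∀ j ∈ U.image (fun j => j.val), j ≤ n - 2 := by
  intro j hj
  obtain ⟨j', -, rfl⟩ := Finset.mem_image.mp hj
  have := j'.isLt
  omega

lemma lift1_mem {n : ℕ} (U : Finset (Fin (n - 1))) (j : Fin (n - 1)) :
    (j : ℕ) ∈ U.image (fun j => j.val) ↔ j ∈ U := by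
  constructor
  · intro h
    obtain ⟨j', hj', hEq⟩ := Finset.mem_image.mp h
    have : j' = j := Fin.ext hEq
    exact this ▸ hj'
  · intro h
    exact Finset.mem_image.mpr ⟨j, h, rfl⟩

lemma pair_le {n : ℕ} (hn : 3 ≤ n) : ∀ j ∈ ({0, n - 1} : Finset ℕ), j ≤ n - 1 := by
  intro j hj
  rcases Finset.mem_insert.mp hj with h | h
  · omega
  · simp at h; omega

lemma PhiMap_injective {m n : ℕ} (hm : 3 ≤ m) (hn : 3 ≤ n) :
    Function.Injective (PhiMap m n) := by
  have hAB : ∀ (i : Fin (m - 1)) (R : Finset ℕ), 0 ∈ R →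
      q0 (m - 1 - i.val) * Ln n ≠ PhiB n R := by
    intro i R hR h
    have h1 : zseq n 0 ∈ PhiB n R := zseq0_mem_PhiB hn hR
    rw [← h] at h1
    have h2 := countA h1
    rw [count_zseq] at h2
    have := i.isLt
    omega
  have hAC : ∀ (i : Fin (m - 1)) (R : Finset ℕ), q0 (m - 1 - i.val) * Ln n ≠ PhiC n R := by
    intro i R h
    have := i.isLt
    have h1 : List.replicate (m - 1 - i.val) 0 ++ zseq n 0 ∈ q0 (m - 1 - i.val) * Ln n :=
      zq_mem_A hn _
    rw [h] at h1
    exact no_zero_PhiC hn h1 (zero_mem_zq (by omega))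
  have hBC : ∀ (R R' : Finset ℕ), PhiB n R ≠ PhiC n R' := by
    intro R R' h
    have h1 : (0 :: zseq n 0) ∈ PhiB n R := d1_mem_PhiB hn R
    rw [h] at h1
    exact no_zero_PhiC hn h1 (by simp)
  intro x y h
  match x, y with
  | Sum.inl (Sum.inl i), Sum.inl (Sum.inl i') =>
    simp only [PhiMap] at h
    have hii : m - 1 - i.val = m - 1 - i'.val := by
      have hi := i.isLt
      have hi' := i'.isLt
      have h1 : List.replicate (m - 1 - i.val) 0 ++ zseq n 0 ∈ q0 (m - 1 - i'.val) * Ln n := by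
        rw [← h]; exact zq_mem_A hn _
      have h2 : List.replicate (m - 1 - i'.val) 0 ++ zseq n 0 ∈ q0 (m - 1 - i.val) * Ln n := by
        rw [h]; exact zq_mem_A hn _
      have c1 := countA h1
      have c2 := countA h2
      rw [count_zq] at c1 c2
      omega
    have hi := i.isLt
    have hi' := i'.isLt
    congr 2
    exact Fin.ext (by omega)
  | Sum.inl (Sum.inl i), Sum.inl (Sum.inr T) =>
    simp only [PhiMap] at h
    exact absurd h (hAB i _ (lift2_zero T))
  | Sum.inl (Sum.inl i), Sum.inr (Sum.inl U) =>
    simp only [PhiMap] at h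
    exact absurd h (hAC i _)
  | Sum.inl (Sum.inl i), Sum.inr (Sum.inr false) =>
    simp only [PhiMap] at h
    exact absurd h (hAB i _ (Finset.mem_insert_self _ _))
  | Sum.inl (Sum.inl i), Sum.inr (Sum.inr true) =>
    simp only [PhiMap] at h
    exact absurd h (hAC i _)
  | Sum.inl (Sum.inr T), Sum.inl (Sum.inl i) =>
    simp only [PhiMap] at h
    exact absurd h.symm (hAB i _ (lift2_zero T))
  | Sum.inl (Sum.inr T), Sum.inl (Sum.inr T') =>
    simp only [PhiMap] at h
    congr 2
    ext j
    rw [← lift2_mem T j, ← lift2_mem T' j]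
    constructor
    · intro hj
      have h1 : zseq n ((j : ℕ) + 1) ∈ PhiB n (insert 0 (T.image (fun j => j.val + 1))) :=
        (zseq_mem_PhiB_iff hn (by omega) (by have := j.isLt; omega) (lift2_le hn T)).mpr hj
      rw [h] at h1
      exact (zseq_mem_PhiB_iff hn (by omega) (by have := j.isLt; omega) (lift2_le hn T')).mp h1
    · intro hj
      have h1 : zseq n ((j : ℕ) + 1) ∈ PhiB n (insert 0 (T'.image (fun j => j.val + 1))) :=
        (zseq_mem_PhiB_iff hn (by omega) (by have := j.isLt; omega) (lift2_le hn T')).mpr hj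
      rw [← h] at h1
      exact (zseq_mem_PhiB_iff hn (by omega) (by have := j.isLt; omega) (lift2_le hn T)).mp h1
  | Sum.inl (Sum.inr T), Sum.inr (Sum.inl U) =>
    simp only [PhiMap] at h
    exact absurd h (hBC _ _)
  | Sum.inl (Sum.inr T), Sum.inr (Sum.inr false) =>
    simp only [PhiMap] at h
    exfalso
    have h1 : ([] : List (Fin 5)) ∈ PhiB n {0, n - 1} :=
      (nil_mem_PhiB_iff hn).mpr (by simp)
    rw [← h] at h1
    have h2 := (nil_mem_PhiB_iff hn).mp h1
    have := lift2_le hn T _ h2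
    omega
  | Sum.inl (Sum.inr T), Sum.inr (Sum.inr true) =>
    simp only [PhiMap] at h
    exact absurd h (hBC _ _)
  | Sum.inr (Sum.inl U), Sum.inl (Sum.inl i) =>
    simp only [PhiMap] at h
    exact absurd h.symm (hAC i _)
  | Sum.inr (Sum.inl U), Sum.inl (Sum.inr T) =>
    simp only [PhiMap] at h
    exact absurd h.symm (hBC _ _)
  | Sum.inr (Sum.inl U), Sum.inr (Sum.inl U') =>
    simp only [PhiMap] at h
    congr 2
    ext j
    rw [← lift1_mem U j, ← lift1_mem U' j]
    constructor
    · intro hj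
      have h1 : zseq n (j : ℕ) ∈ PhiC n (U.image (fun j => j.val)) :=
        (zseq_mem_PhiC_iff hn (by have := j.isLt; omega) (lift1_le hn U)).mpr hj
      rw [h] at h1
      exact (zseq_mem_PhiC_iff hn (by have := j.isLt; omega) (lift1_le hn U')).mp h1
    · intro hj
      have h1 : zseq n (j : ℕ) ∈ PhiC n (U'.image (fun j => j.val)) :=
        (zseq_mem_PhiC_iff hn (by have := j.isLt; omega) (lift1_le hn U')).mpr hj
      rw [← h] at h1
      exact (zseq_mem_PhiC_iff hn (by have := j.isLt; omega) (lift1_le hn U)).mp h1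
  | Sum.inr (Sum.inl U), Sum.inr (Sum.inr false) =>
    simp only [PhiMap] at h
    exact absurd h.symm (hBC _ _)
  | Sum.inr (Sum.inl U), Sum.inr (Sum.inr true) =>
    simp only [PhiMap] at h
    exfalso
    have h1 : ([] : List (Fin 5)) ∈ PhiC n {0, n - 1} :=
      nil_mem_PhiC_iff.mpr (by simp)
    rw [← h] at h1
    have h2 := nil_mem_PhiC_iff.mp h1
    have := lift1_le hn U _ h2
    omega
  | Sum.inr (Sum.inr false), Sum.inl (Sum.inl i) =>
    simp only [PhiMap] at h
    exact absurd h.symm (hAB i _ (Finset.mem_insert_self _ _))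
  | Sum.inr (Sum.inr false), Sum.inl (Sum.inr T) =>
    simp only [PhiMap] at h
    exfalso
    have h1 : ([] : List (Fin 5)) ∈ PhiB n {0, n - 1} :=
      (nil_mem_PhiB_iff hn).mpr (by simp)
    rw [h] at h1
    have h2 := (nil_mem_PhiB_iff hn).mp h1
    have := lift2_le hn T _ h2
    omega
  | Sum.inr (Sum.inr false), Sum.inr (Sum.inl U) =>
    simp only [PhiMap] at h
    exact absurd h (hBC _ _)
  | Sum.inr (Sum.inr false), Sum.inr (Sum.inr false) => rfl
  | Sum.inr (Sum.inr false), Sum.inr (Sum.inr true) =>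
    simp only [PhiMap] at h
    exact absurd h (hBC _ _)
  | Sum.inr (Sum.inr true), Sum.inl (Sum.inl i) =>
    simp only [PhiMap] at h
    exact absurd h.symm (hAC i _)
  | Sum.inr (Sum.inr true), Sum.inl (Sum.inr T) =>
    simp only [PhiMap] at h
    exact absurd h.symm (hBC _ _)
  | Sum.inr (Sum.inr true), Sum.inr (Sum.inl U) =>
    simp only [PhiMap] at h
    exfalso
    have h1 : ([] : List (Fin 5)) ∈ PhiC n {0, n - 1} :=
      nil_mem_PhiC_iff.mpr (by simp)
    rw [h] at h1
    have h2 := nil_mem_PhiC_iff.mp h1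
    have := lift1_le hn U _ h2
    omega
  | Sum.inr (Sum.inr true), Sum.inr (Sum.inr false) =>
    simp only [PhiMap] at h
    exact absurd h.symm (hBC _ _)
  | Sum.inr (Sum.inr true), Sum.inr (Sum.inr true) => rfl

lemma PhiMap_mem {m n : ℕ} (hm : 3 ≤ m) (hn : 3 ≤ n) (x : Idx m n) :
    PhiMap m n x ∈ quotientSet (Lp m * Ln n) := by
  match x with
  | Sum.inl (Sum.inl i) =>
    exact ⟨List.replicate i.val 0, fun a _ => alph_P hm hn a,
      (quotA hm hn (by have := i.isLt; omega)).symm⟩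
  | Sum.inl (Sum.inr T) =>
    obtain ⟨y, hy12, hrs⟩ := reach hn (T.image (fun j => j.val + 1)) (by
      intro x hx
      obtain ⟨j, -, rfl⟩ := Finset.mem_image.mp hx
      have := j.isLt
      omega)
    have hy : ∀ a ∈ y, a ≠ 0 ∧ a ≠ 4 := by
      intro a ha
      rcases hy12 a ha with h | h <;> (rw [h]; exact ⟨by decide, by decide⟩)
    refine ⟨List.replicate (m - 1) 0 ++ y, fun a _ => alph_P hm hn a, ?_⟩
    show PhiB n (insert 0 (T.image (fun j => j.val + 1))) = _
    rw [quotB hm hn hy, hrs]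
  | Sum.inr (Sum.inr false) =>
    obtain ⟨y, hy12, hrs⟩ := reach hn {n - 2} (by intro x hx; simp at hx; omega)
    have hy : ∀ a ∈ y ++ [3], a ≠ 0 ∧ a ≠ 4 := by
      intro a ha
      rcases List.mem_append.mp ha with h | h
      · rcases hy12 a h with h' | h' <;> (rw [h']; exact ⟨by decide, by decide⟩)
      · simp at h; rw [h]; exact ⟨by decide, by decide⟩
    refine ⟨List.replicate (m - 1) 0 ++ (y ++ [3]), fun a _ => alph_P hm hn a, ?_⟩
    show PhiB n {0, n - 1} = _
    rw [quotB hm hn hy, rsF_snoc, hrs]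
    have himg : (insert 0 ({n - 2} : Finset ℕ)).image (dlt n 3) = {0, n - 1} := by
      rw [Finset.image_insert, Finset.image_singleton]
      rw [dlt_three hn (by omega), dlt_three hn (by omega)]
      have h1 : ¬ (0 : ℕ) = n - 2 := by omega
      have h2 : (n - 2 : ℕ) = n - 2 := rfl
      rw [if_neg h1, if_pos h2]
    rw [himg]
    have : insert 0 ({0, n - 1} : Finset ℕ) = {0, n - 1} :=
      Finset.insert_eq_self.mpr (Finset.mem_insert_self _ _)
    rw [this]
  | Sum.inr (Sum.inr true) =>
    obtain ⟨y, hy12, hrs⟩ := reach hn {n - 2} (by intro x hx; simp at hx; omega)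
    have hy : ∀ a ∈ y, a ≠ 0 ∧ a ≠ 4 := by
      intro a ha
      rcases hy12 a ha with h | h <;> (rw [h]; exact ⟨by decide, by decide⟩)
    refine ⟨List.replicate (m - 1) 0 ++ (y ++ 4 :: [3]), fun a _ => alph_P hm hn a, ?_⟩
    show PhiC n {0, n - 1} = _
    rw [quotC hm hn hy, hrs]
    have himg : (insert 0 ({n - 2} : Finset ℕ)).image (fun s => runF n s (4 :: [3])) =
        {0, n - 1} := by
      rw [Finset.image_insert, Finset.image_singleton]
      have hf : ∀ s : ℕ, s ≤ n - 2 → runF n s (4 :: [3]) = dlt n 3 s := by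
        intro s hs
        show runF n (dlt n 4 s) [3] = dlt n 3 s
        rw [dlt_four hn hs]
        rfl
      rw [hf 0 (by omega), hf (n - 2) (by omega), dlt_three hn (by omega),
        dlt_three hn (by omega)]
      have h1 : ¬ (0 : ℕ) = n - 2 := by omega
      rw [if_neg h1, if_pos rfl]
    rw [himg]
  | Sum.inr (Sum.inl U) =>
    set U₀ : Finset ℕ := U.image (fun j => j.val) with hU₀def
    have hU₀le : ∀ j ∈ U₀, j ≤ n - 2 := lift1_le hn U
    by_cases hU0 : U₀ = ∅
    · refine ⟨[4], fun a _ => alph_P hm hn a, ?_⟩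
      show PhiC n U₀ = _
      rw [quotE hm hn, hU0]
    by_cases h0U : 0 ∈ U₀
    · obtain ⟨y, hy12, hrs⟩ := reach hn (U₀.erase 0) (by
        intro x hx
        have h1 := Finset.mem_of_mem_erase hx
        have h2 := Finset.ne_of_mem_erase hx
        have := hU₀le x h1
        omega)
      have hy : ∀ a ∈ y, a ≠ 0 ∧ a ≠ 4 := by
        intro a ha
        rcases hy12 a ha with h | h <;> (rw [h]; exact ⟨by decide, by decide⟩)
      refine ⟨List.replicate (m - 1) 0 ++ (y ++ 4 :: []), fun a _ => alph_P hm hn a, ?_⟩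
      show PhiC n U₀ = _
      rw [quotC hm hn hy, hrs, Finset.insert_erase h0U]
      have himg : U₀.image (fun s => runF n s (4 :: [])) = U₀ := by
        have hcong : ∀ u ∈ U₀, (fun s => runF n s (4 :: ([] : List (Fin 5)))) u = u := by
          intro u hu
          show runF n (dlt n 4 u) [] = u
          rw [dlt_four hn (hU₀le u hu), runF_nil]
        rw [Finset.image_congr hcong, Finset.image_id']
      rw [himg]
    · have hne : U₀.Nonempty := Finset.nonempty_iff_ne_empty.mpr hU0
      set k := U₀.min' hne with hkdef
      have hkmem : k ∈ U₀ := U₀.min'_mem hne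
      have hkle : ∀ u ∈ U₀, k ≤ u := fun u hu => U₀.min'_le u hu
      set V : Finset ℕ := U₀.image (fun u => u - k) with hVdef
      have h0V : 0 ∈ V := Finset.mem_image.mpr ⟨k, hkmem, by omega⟩
      have hVle : ∀ x ∈ V, x ≤ n - 2 := by
        intro x hx
        obtain ⟨u, hu, rfl⟩ := Finset.mem_image.mp hx
        have := hU₀le u hu
        omega
      obtain ⟨y, hy12, hrs⟩ := reach hn (V.erase 0) (by
        intro x hx
        have h1 := Finset.mem_of_mem_erase hx
        have h2 := Finset.ne_of_mem_erase hx
        have := hVle x h1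
        omega)
      have hy : ∀ a ∈ y, a ≠ 0 ∧ a ≠ 4 := by
        intro a ha
        rcases hy12 a ha with h | h <;> (rw [h]; exact ⟨by decide, by decide⟩)
      refine ⟨List.replicate (m - 1) 0 ++ (y ++ 4 :: List.replicate k 1),
        fun a _ => alph_P hm hn a, ?_⟩
      show PhiC n U₀ = _
      rw [quotC hm hn hy, hrs, Finset.insert_erase h0V]
      have himg : V.image (fun s => runF n s (4 :: List.replicate k 1)) = U₀ := by
        rw [hVdef, Finset.image_image]
        have hcong : ∀ u ∈ U₀,
            ((fun s => runF n s (4 :: List.replicate k 1)) ∘ (fun u => u - k)) u = u := by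
          intro u hu
          have hku := hkle u hu
          have hun := hU₀le u hu
          simp only [Function.comp_apply]
          show runF n (dlt n 4 (u - k)) (List.replicate k 1) = u
          rw [dlt_four hn (by omega), runF_replicate_one hn (by omega)]
          have : u - k + k = u := by omega
          rw [this, Nat.mod_eq_of_lt (by omega)]
        rw [Finset.image_congr hcong, Finset.image_id']
      rw [himg]

lemma part2 {m n : ℕ} (hm : 3 ≤ m) (hn : 3 ≤ n) :
    HasComplexity (Lp m * Ln n) (m + 2 ^ (n - 2) + 2 ^ (n - 1) + 1) := by
  obtain ⟨hfin, hle⟩ := upper_bound (Lp m) (Ln n) (rightIdeal_Lp hm) (rightIdeal_Ln hn)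
    hm hn (hasComplexity_Lp hm) (hasComplexity_Ln hn)
  refine ⟨hfin, le_antisymm hle ?_⟩
  have hsub : Set.range (PhiMap m n) ⊆ quotientSet (Lp m * Ln n) := by
    rintro K ⟨x, rfl⟩
    exact PhiMap_mem hm hn x
  have hcard1 : Nat.card (Set.range (PhiMap m n)) = Nat.card (Idx m n) :=
    Nat.card_range_of_injective (PhiMap_injective hm hn)
  have hcard2 : Nat.card (Idx m n) = (m - 1 + 2 ^ (n - 2)) + (2 ^ (n - 1) + 2) := by
    rw [Nat.card_eq_fintype_card]
    simp [Fintype.card_sum, Fintype.card_finset]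
  have hrange : (Set.range (PhiMap m n)).ncard = (m - 1 + 2 ^ (n - 2)) + (2 ^ (n - 1) + 2) := by
    rw [← Nat.card_coe_set_eq, hcard1, hcard2]
  have hge := Set.ncard_le_ncard hsub hfin
  rw [hrange] at hge
  have h2 : (1 : ℕ) ≤ 2 ^ (n - 2) := Nat.one_le_two_pow
  omega

end RIP

open RIP

/-- unrestricted complexity of product of right ideals:
upper bound `m + 2^(n-2) + 2^(n-1) + 1`, and tightness with four-letter alphabets
neither containing the other. -/
theorem right_ideal_product (m n : ℕ) (hm : 3 ≤ m) (hn : 3 ≤ n) :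
    (∀ (α : Type) (L' L : Language α), IsRightIdeal L' → IsRightIdeal L →
      HasComplexity L' m → HasComplexity L n →
      (quotientSet (L' * L)).Finite ∧
        (quotientSet (L' * L)).ncard ≤ m + 2 ^ (n - 2) + 2 ^ (n - 1) + 1) ∧
    (∃ L' L : Language (Fin 5), IsRightIdeal L' ∧ IsRightIdeal L ∧
      (alphabetOf L').ncard = 4 ∧ (alphabetOf L).ncard = 4 ∧
      (alphabetOf L' \ alphabetOf L).Nonempty ∧
      (alphabetOf L \ alphabetOf L').Nonempty ∧
      HasComplexity L' m ∧ HasComplexity L n ∧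
      HasComplexity (L' * L) (m + 2 ^ (n - 2) + 2 ^ (n - 1) + 1)) := by
  constructor
  · intro α L' L hI' hI hC' hC
    exact upper_bound L' L hI' hI hm hn hC' hC
  · refine ⟨Lp m, Ln n, rightIdeal_Lp hm, rightIdeal_Ln hn, ?_, ?_, ?_, ?_,
      hasComplexity_Lp hm, hasComplexity_Ln hn, part2 hm hn⟩
    · rw [alph_Lp hm]; exact ncard_SigA
    · rw [alph_Ln hn]; exact ncard_SigB
    · rw [alph_Lp hm, alph_Ln hn]
      refine ⟨0, zero_mem_SigA, ?_⟩
      simp only [SigB, Set.mem_insert_iff, Set.mem_singleton_iff]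
      push_neg
      exact ⟨by decide, by decide, by decide, by decide⟩
    · rw [alph_Lp hm, alph_Ln hn]
      refine ⟨4, ?_, four_not_SigA⟩
      simp [SigB]
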